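/- arXiv:1404.7721 — 6 statements merged into one kernel-verified Lean document; each statement's English description precedes it below -/
import Mathlib

section
/- Let f be an L^2-martingale with respect to an increasing filtration (F_n) on a probability space. Then the BMO^α norm sup_{n≥0} sup_{A∈F_n} P(A)^{-1/2-α} (∫_A |f - f_{n-1}|² dP)^{1/2} equals sup_τ P(τ<∞)^{-1/2-α} ‖(f - f_{τ-1}) 1_{τ<∞}‖_{L²}, where the latter supremum is taken over all stopping times τ. -/
open MeasureTheory ENNReal Set
open scoped Classical NNReal

noncomputable section

/-- Convention `f_{-1} = 0`: the value `f_{n-1}`. -/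
def predVal {Ω : Type*} (f : ℕ → Ω → ℝ) (n : ℕ) (ω : Ω) : ℝ :=
  if n = 0 then 0 else f (n - 1) ω

/-- Martingale difference `d_k f` (with `f_{-1} = 0`). -/
def mdiff {Ω : Type*} (f : ℕ → Ω → ℝ) (k : ℕ) (ω : Ω) : ℝ :=
  if k = 0 then f 0 ω else f k ω - f (k - 1) ω

/-- The `BMO^α` norm of the martingale `f` with final value `g`:
`sup_n sup_{A ∈ F_n} P(A)^{-1/2-α} (∫_A |g - f_{n-1}|² dP)^{1/2}`. -/
def bmoNorm {Ω : Type*} {m0 : MeasurableSpace Ω} (μ : Measure Ω)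
    (ℱ : Filtration ℕ m0) (α : ℝ) (f : ℕ → Ω → ℝ) (g : Ω → ℝ) : ℝ≥0∞ :=
  ⨆ (n : ℕ) (A : Set Ω) (_ : MeasurableSet[ℱ n] A),
    (∫⁻ ω in A, (‖g ω - predVal f n ω‖₊ : ℝ≥0∞) ^ 2 ∂μ) ^ (1/2 : ℝ)
      / μ A ^ (1/2 + α : ℝ)

/-- Stopping time with values in `ℕ ∪ {∞}`. -/
def IsStopTime {Ω : Type*} {m0 : MeasurableSpace Ω} (ℱ : Filtration ℕ m0)
    (τ : Ω → ℕ∞) : Prop :=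
  ∀ n : ℕ, MeasurableSet[ℱ n] {ω | τ ω ≤ (n : ℕ∞)}

/-- Mass of the tent over `τ` for the measure `w_k dP ⊗ dm`:
`∫_Ω Σ_{k ≥ τ} w_k 1_{τ < ∞} dP`. -/
def tentMass {Ω : Type*} [MeasurableSpace Ω] (μ : Measure Ω)
    (w : ℕ → Ω → ℝ≥0∞) (τ : Ω → ℕ∞) : ℝ≥0∞ :=
  ∫⁻ ω, ∑' k : ℕ, if τ ω ≤ (k : ℕ∞) ∧ τ ω < ⊤ then w k ω else 0 ∂μ

/-- The `α`-Carleson norm of the measure `w_k dP ⊗ dm`: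
`sup_τ μ(τ̂)/P(τ<∞)^{1+2α}`. -/
def carlesonNorm {Ω : Type*} {m0 : MeasurableSpace Ω} (μ : Measure Ω)
    (ℱ : Filtration ℕ m0) (α : ℝ) (w : ℕ → Ω → ℝ≥0∞) : ℝ≥0∞ :=
  ⨆ (τ : Ω → ℕ∞) (_ : IsStopTime ℱ τ),
    tentMass μ w τ / μ {ω | τ ω < ⊤} ^ (1 + 2*α : ℝ)

/-- Subadditivity of `x ↦ x^p`, `p ≥ 1`, over countable sums in `ℝ≥0∞`. -/
lemma tsum_rpow_le_rpow_tsum {a : ℕ → ℝ≥0∞} {p : ℝ} (hp : 1 ≤ p)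
    (hS : ∑' n, a n ≠ ⊤) : ∑' n, (a n) ^ p ≤ (∑' n, a n) ^ p := by
  set S := ∑' n, a n with hSdef
  have hp0 : (0:ℝ) < p := lt_of_lt_of_le one_pos hp
  by_cases hS0 : S = 0
  · have ha : ∀ n, a n = 0 := by
      intro n
      have h := ENNReal.le_tsum (f := a) n
      rw [← hSdef, hS0] at h
      simpa using h
    simp [ha, ENNReal.zero_rpow_of_pos hp0, hS0]
  · calc ∑' n, (a n) ^ p ≤ ∑' n, S ^ (p-1) * a n := by
          refine ENNReal.tsum_le_tsum fun n => ?_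
          by_cases h0 : a n = 0
          · simp [h0, ENNReal.zero_rpow_of_pos hp0]
          · have hle : a n ≤ S := ENNReal.le_tsum n
            have hnt : a n ≠ ⊤ := ne_top_of_le_ne_top hS hle
            have hsplit : a n ^ p = a n ^ (p-1) * a n := by
              have := ENNReal.rpow_add (p-1) 1 h0 hnt
              rw [sub_add_cancel] at this
              rw [this, ENNReal.rpow_one]
            rw [hsplit]
            exact mul_le_mul_left (ENNReal.rpow_le_rpow hle (by linarith)) _
      _ = S ^ (p-1) * S := ENNReal.tsum_mul_left.trans rfl
      _ = S ^ p := by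
          have := ENNReal.rpow_add (p-1) 1 hS0 hS
          rw [sub_add_cancel] at this
          rw [this, ENNReal.rpow_one]

/-- the `BMO^α` norm equals the supremum over stopping times `τ` of
`P(τ<∞)^{-1/2-α} ‖(f - f_{τ-1}) 1_{τ<∞}‖_{L²}`. -/
theorem stmt0 {Ω : Type*} {m0 : MeasurableSpace Ω} (μ : Measure Ω)
    [IsProbabilityMeasure μ] (ℱ : Filtration ℕ m0)
    (α : ℝ) (hα0 : 0 ≤ α) (hα1 : α ≤ 1)
    (f : ℕ → Ω → ℝ) (g : Ω → ℝ) (hf : Martingale f ℱ μ) (hg : MemLp g 2 μ)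
    (hfg : ∀ n, f n =ᵐ[μ] μ[g | ℱ n]) :
    bmoNorm μ ℱ α f g =
      ⨆ (τ : Ω → ℕ∞) (_ : IsStopTime ℱ τ),
        (∫⁻ ω in {ω | τ ω < ⊤},
            (‖g ω - predVal f (τ ω).toNat ω‖₊ : ℝ≥0∞) ^ 2 ∂μ) ^ (1/2 : ℝ)
          / μ {ω | τ ω < ⊤} ^ (1/2 + α : ℝ) := by
  apply le_antisymm
  · -- bmo ≤ sup over stopping times
    refine iSup_le fun n => iSup_le fun A => iSup_le fun hA => ?_
    set τ : Ω → ℕ∞ := fun ω => if ω ∈ A then (n : ℕ∞) else ⊤ with hτdef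
    have hτ : IsStopTime ℱ τ := by
      intro m
      by_cases hnm : n ≤ m
      · have : {ω | τ ω ≤ (m : ℕ∞)} = A := by
          ext ω
          simp only [hτdef, mem_setOf_eq]
          by_cases hω : ω ∈ A
          · simp [hω, Nat.cast_le, hnm]
          · simp [hω]
        rw [this]
        exact ℱ.mono hnm _ hA
      · have : {ω | τ ω ≤ (m : ℕ∞)} = ∅ := by
          ext ω
          simp only [hτdef, mem_setOf_eq, mem_empty_iff_false, iff_false]
          by_cases hω : ω ∈ A
          · simp [hω, Nat.cast_le, hnm]
          · simp [hω]
        rw [this]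
        exact @MeasurableSet.empty _ (ℱ m)
    have hset : {ω | τ ω < ⊤} = A := by
      ext ω
      simp only [hτdef, mem_setOf_eq]
      by_cases hω : ω ∈ A
      · simp [hω, WithTop.coe_lt_top]
      · simp [hω]
    have hint : ∫⁻ ω in {ω | τ ω < ⊤},
        (‖g ω - predVal f (τ ω).toNat ω‖₊ : ℝ≥0∞) ^ 2 ∂μ
        = ∫⁻ ω in A, (‖g ω - predVal f n ω‖₊ : ℝ≥0∞) ^ 2 ∂μ := by
      rw [hset]
      refine setLIntegral_congr_fun (ℱ.le n A hA) (fun ω hω => ?_)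
      simp [hτdef, hω]
    refine le_iSup_of_le τ (le_iSup_of_le hτ ?_)
    rw [hint, hset]
  · -- sup over stopping times ≤ bmo
    refine iSup_le fun τ => iSup_le fun hτ => ?_
    set B := bmoNorm μ ℱ α f g with hB
    set S := {ω | τ ω < ⊤} with hSdef
    by_cases hS0 : μ S = 0
    · have : μ.restrict S = 0 := Measure.restrict_eq_zero.2 hS0
      rw [this]
      simp [ENNReal.zero_rpow_of_pos (by norm_num : (0:ℝ) < 1/2)]
    · set A : ℕ → Set Ω := fun n => {ω | τ ω = (n : ℕ∞)} with hAdef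
      have hAn : ∀ n, MeasurableSet[ℱ n] (A n) := by
        intro n
        match n with
        | 0 =>
          have : A 0 = {ω | τ ω ≤ (0 : ℕ∞)} := by
            ext ω; simp [hAdef, le_zero_iff]
          rw [this]; exact hτ 0
        | Nat.succ k =>
          have : A (k+1) = {ω | τ ω ≤ ((k+1 : ℕ) : ℕ∞)} ∩ {ω | τ ω ≤ (k : ℕ∞)}ᶜ := by
            ext ω
            simp only [hAdef, mem_setOf_eq, mem_inter_iff, mem_compl_iff]
            constructor
            · intro h
              rw [h]
              refine ⟨le_refl _, fun hc => ?_⟩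
              have : k + 1 ≤ k := by exact_mod_cast hc
              omega
            · rintro ⟨h1, h2⟩
              have hnt : τ ω ≠ ⊤ := ne_top_of_le_ne_top (ENat.coe_ne_top _) h1
              have hm : ((τ ω).toNat : ℕ∞) = τ ω := ENat.coe_toNat hnt
              rw [← hm] at h1 h2 ⊢
              have h1' : (τ ω).toNat ≤ k + 1 := by exact_mod_cast h1
              have h2' : ¬ (τ ω).toNat ≤ k := fun h => h2 (by exact_mod_cast h)
              exact_mod_cast by omega
          rw [this]
          exact (hτ (k+1)).inter ((ℱ.mono (Nat.le_succ k) _ (hτ k)).compl)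
      have hAm : ∀ n, MeasurableSet (A n) := fun n => ℱ.le n _ (hAn n)
      have hdisj : Pairwise (Function.onFun Disjoint A) := by
        intro m n hmn
        refine Set.disjoint_left.2 fun ω h1 h2 => hmn ?_
        have : ((m : ℕ∞)) = (n : ℕ∞) := h1.symm.trans h2
        exact_mod_cast this
      have hunion : S = ⋃ n, A n := by
        ext ω
        simp only [hSdef, hAdef, mem_setOf_eq, mem_iUnion]
        constructor
        · intro h
          exact ⟨(τ ω).toNat, (ENat.coe_toNat h.ne).symm⟩
        · rintro ⟨m, hm⟩
          rw [hm]; simp [lt_top_iff_ne_top]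
      have hIdecomp : ∫⁻ ω in S,
          (‖g ω - predVal f (τ ω).toNat ω‖₊ : ℝ≥0∞) ^ 2 ∂μ
          = ∑' n, ∫⁻ ω in A n, (‖g ω - predVal f n ω‖₊ : ℝ≥0∞) ^ 2 ∂μ := by
        rw [hunion, lintegral_iUnion hAm hdisj]
        refine tsum_congr fun n => ?_
        refine setLIntegral_congr_fun (hAm n) (fun ω hω => ?_)
        have : τ ω = (n : ℕ∞) := hω
        rw [this]
        simp
      have hμS_ne_top : μ S ≠ ⊤ := measure_ne_top μ S
      have hsum : ∑' n, μ (A n) = μ S := by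
        rw [hunion, measure_iUnion hdisj hAm]
      -- per-term bound
      have hterm : ∀ n, (∫⁻ ω in A n, (‖g ω - predVal f n ω‖₊ : ℝ≥0∞) ^ 2 ∂μ)
          ≤ B ^ (2:ℝ) * μ (A n) ^ (1 + 2*α : ℝ) := by
        intro n
        set J := ∫⁻ ω in A n, (‖g ω - predVal f n ω‖₊ : ℝ≥0∞) ^ 2 ∂μ with hJ
        by_cases h0 : μ (A n) = 0
        · have : μ.restrict (A n) = 0 := Measure.restrict_eq_zero.2 h0
          rw [hJ, this]
          simp
        · have hbmo : J ^ (1/2:ℝ) / μ (A n) ^ (1/2 + α : ℝ) ≤ B := by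
            rw [hB, bmoNorm]
            exact le_iSup_of_le n (le_iSup_of_le (A n) (le_iSup_of_le (hAn n) le_rfl))
          have hb_ne0 : μ (A n) ^ (1/2 + α : ℝ) ≠ 0 := by
            simp [ENNReal.rpow_eq_zero_iff, h0, measure_ne_top μ (A n)]
          have hb_net : μ (A n) ^ (1/2 + α : ℝ) ≠ ⊤ := by
            simp [ENNReal.rpow_eq_top_iff, h0, measure_ne_top μ (A n)]
          have h1 : J ^ (1/2:ℝ) ≤ B * μ (A n) ^ (1/2 + α : ℝ) :=
            (ENNReal.div_le_iff_le_mul (Or.inl hb_ne0) (Or.inl hb_net)).1 hbmo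
          have h2 : J = (J ^ (1/2:ℝ)) ^ (2:ℝ) := by
            rw [← ENNReal.rpow_mul]
            norm_num
          calc J = (J ^ (1/2:ℝ)) ^ (2:ℝ) := h2
            _ ≤ (B * μ (A n) ^ (1/2 + α : ℝ)) ^ (2:ℝ) :=
                ENNReal.rpow_le_rpow h1 (by norm_num)
            _ = B ^ (2:ℝ) * μ (A n) ^ (1 + 2*α : ℝ) := by
                rw [ENNReal.mul_rpow_of_nonneg _ _ (by norm_num : (0:ℝ) ≤ 2),
                  ← ENNReal.rpow_mul]
                ring_nf
      have hsum_le : ∑' n, μ (A n) ^ (1 + 2*α : ℝ) ≤ μ S ^ (1 + 2*α : ℝ) := by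
        rw [← hsum]
        exact tsum_rpow_le_rpow_tsum (by linarith) (hsum ▸ hμS_ne_top)
      have hI : (∫⁻ ω in S, (‖g ω - predVal f (τ ω).toNat ω‖₊ : ℝ≥0∞) ^ 2 ∂μ)
          ≤ B ^ (2:ℝ) * μ S ^ (1 + 2*α : ℝ) := by
        rw [hIdecomp]
        calc ∑' n, ∫⁻ ω in A n, (‖g ω - predVal f n ω‖₊ : ℝ≥0∞) ^ 2 ∂μ
            ≤ ∑' n, B ^ (2:ℝ) * μ (A n) ^ (1 + 2*α : ℝ) :=
              ENNReal.tsum_le_tsum hterm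
          _ = B ^ (2:ℝ) * ∑' n, μ (A n) ^ (1 + 2*α : ℝ) := ENNReal.tsum_mul_left
          _ ≤ B ^ (2:ℝ) * μ S ^ (1 + 2*α : ℝ) := mul_le_mul_right hsum_le _
      have hfinal : (∫⁻ ω in S, (‖g ω - predVal f (τ ω).toNat ω‖₊ : ℝ≥0∞) ^ 2 ∂μ) ^ (1/2:ℝ)
          ≤ B * μ S ^ (1/2 + α : ℝ) := by
        calc (∫⁻ ω in S, (‖g ω - predVal f (τ ω).toNat ω‖₊ : ℝ≥0∞) ^ 2 ∂μ) ^ (1/2:ℝ)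
            ≤ (B ^ (2:ℝ) * μ S ^ (1 + 2*α : ℝ)) ^ (1/2:ℝ) :=
              ENNReal.rpow_le_rpow hI (by norm_num)
          _ = B * μ S ^ (1/2 + α : ℝ) := by
              rw [ENNReal.mul_rpow_of_nonneg _ _ (by norm_num : (0:ℝ) ≤ 1/2),
                ← ENNReal.rpow_mul, ← ENNReal.rpow_mul]
              norm_num
              ring_nf
      have hb_ne0 : μ S ^ (1/2 + α : ℝ) ≠ 0 := by
        simp [ENNReal.rpow_eq_zero_iff, hS0, hμS_ne_top]
      have hb_net : μ S ^ (1/2 + α : ℝ) ≠ ⊤ := by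
        simp [ENNReal.rpow_eq_top_iff, hS0, hμS_ne_top]
      calc (∫⁻ ω in S, (‖g ω - predVal f (τ ω).toNat ω‖₊ : ℝ≥0∞) ^ 2 ∂μ) ^ (1/2:ℝ)
            / μ S ^ (1/2 + α : ℝ)
          ≤ B * μ S ^ (1/2 + α : ℝ) / μ S ^ (1/2 + α : ℝ) :=
            ENNReal.div_le_div_right hfinal _
        _ = B := by
            rw [mul_div_assoc, ENNReal.div_self hb_ne0 hb_net, mul_one]
end
end

section
/- Let f be an L²-martingale with ‖f‖_{BMO^α} < ∞ and τ a stopping time. Then P(τ<∞)^{-1-2α} ∫_{τ<∞} |f - f_{τ-1}|² dP ≤ ‖f‖²_{BMO^α}, where ‖f‖_{BMO^α} = sup_{n≥0} sup_{A∈F_n} P(A)^{-1/2-α} (∫_A |f-f_{n-1}|² dP)^{1/2}. -/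
open MeasureTheory ENNReal Set
open scoped Classical NNReal

noncomputable section

lemma finset_sum_rpow_le {ι : Type*} (s : Finset ι) (a : ι → ℝ≥0∞) {p : ℝ} (hp : 1 ≤ p) :
    ∑ i ∈ s, a i ^ p ≤ (∑ i ∈ s, a i) ^ p := by
  classical
  induction s using Finset.induction_on with
  | empty => simp [ENNReal.zero_rpow_of_pos (lt_of_lt_of_le zero_lt_one hp)]
  | insert _ _ h ih =>
    rw [Finset.sum_insert h, Finset.sum_insert h]
    exact le_trans (add_le_add_right ih _) (ENNReal.add_rpow_le_rpow_add _ _ hp)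

lemma tsum_rpow_le (a : ℕ → ℝ≥0∞) {p : ℝ} (hp : 1 ≤ p) :
    ∑' n, a n ^ p ≤ (∑' n, a n) ^ p := by
  rw [ENNReal.tsum_eq_iSup_sum]
  refine iSup_le fun s => le_trans (finset_sum_rpow_le s a hp) ?_
  exact ENNReal.rpow_le_rpow (ENNReal.sum_le_tsum s) (le_trans zero_le_one hp)

/-- for an `L²`-martingale `f` with `‖f‖_{BMO^α} < ∞` and a stopping time `τ`,
`P(τ<∞)^{-1-2α} ∫_{τ<∞} |f - f_{τ-1}|² dP ≤ ‖f‖²_{BMO^α}`. -/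
theorem stmt1 {Ω : Type*} {m0 : MeasurableSpace Ω} (μ : Measure Ω)
    [IsProbabilityMeasure μ] (ℱ : Filtration ℕ m0)
    (α : ℝ) (hα0 : 0 ≤ α) (hα1 : α ≤ 1)
    (f : ℕ → Ω → ℝ) (g : Ω → ℝ) (hf : Martingale f ℱ μ) (hg : MemLp g 2 μ)
    (hfg : ∀ n, f n =ᵐ[μ] μ[g | ℱ n])
    (hbmo : bmoNorm μ ℱ α f g < ⊤)
    (τ : Ω → ℕ∞) (hτ : IsStopTime ℱ τ) :
    (∫⁻ ω in {ω | τ ω < ⊤}, (‖g ω - predVal f (τ ω).toNat ω‖₊ : ℝ≥0∞) ^ 2 ∂μ)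
        / μ {ω | τ ω < ⊤} ^ (1 + 2*α : ℝ)
      ≤ bmoNorm μ ℱ α f g ^ 2 := by
  set B := bmoNorm μ ℱ α f g with hB
  set A : ℕ → Set Ω := fun n => {ω | τ ω = (n : ℕ∞)} with hA
  have hAmeas : ∀ n, MeasurableSet[ℱ n] (A n) := by
    intro n
    cases n with
    | zero =>
      have he : A 0 = {ω | τ ω ≤ ((0 : ℕ) : ℕ∞)} := by
        ext ω
        simp only [hA, Set.mem_setOf_eq, Nat.cast_zero]
        exact ⟨fun h => le_of_eq h, fun h => le_antisymm h zero_le⟩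
      rw [he]; exact hτ 0
    | succ m =>
      have he : A (m + 1) =
          {ω | τ ω ≤ ((m + 1 : ℕ) : ℕ∞)} \ {ω | τ ω ≤ ((m : ℕ) : ℕ∞)} := by
        ext ω
        simp only [hA, Set.mem_setOf_eq, Set.mem_diff]
        cases hx : τ ω with
        | top => simp [eq_comm]
        | coe k =>
          simp only [Nat.cast_inj, Nat.cast_le]
          constructor
          · rintro rfl; omega
          · rintro ⟨h1, h2⟩; omega
      rw [he]
      exact (hτ (m + 1)).diff (ℱ.mono (Nat.le_succ m) _ (hτ m))
  have hAmeas0 : ∀ n, MeasurableSet (A n) := fun n => ℱ.le n _ (hAmeas n)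
  have hdisj : Pairwise (Function.onFun Disjoint A) := by
    intro i j hij
    simp only [Function.onFun, Set.disjoint_left]
    intro ω hi hj
    simp only [hA, Set.mem_setOf_eq] at hi hj
    exact hij (by exact_mod_cast hi.symm.trans hj)
  have hUnion : {ω | τ ω < ⊤} = ⋃ n, A n := by
    ext ω
    simp only [Set.mem_setOf_eq, Set.mem_iUnion, hA]
    cases hx : τ ω with
    | top => simp
    | coe k => simp only [Nat.cast_inj]; exact ⟨fun _ => ⟨k, rfl⟩, fun _ => WithTop.coe_lt_top k⟩
  have hp1 : (1 : ℝ) ≤ 1 + 2 * α := by linarith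
  -- per-piece bound
  have hbound : ∀ n, (∫⁻ ω in A n, (‖g ω - predVal f n ω‖₊ : ℝ≥0∞) ^ 2 ∂μ)
      ≤ B ^ 2 * μ (A n) ^ (1 + 2 * α : ℝ) := by
    intro n
    by_cases h0 : μ (A n) = 0
    · rw [Measure.restrict_eq_zero.mpr h0]; simp
    set X := ∫⁻ ω in A n, (‖g ω - predVal f n ω‖₊ : ℝ≥0∞) ^ 2 ∂μ with hX
    have hle : X ^ (1 / 2 : ℝ) / μ (A n) ^ (1 / 2 + α : ℝ) ≤ B := by
      rw [hB, bmoNorm]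
      refine le_iSup_of_le n ?_
      refine le_iSup_of_le (A n) ?_
      exact le_iSup_of_le (hAmeas n) le_rfl
    have hdne : μ (A n) ^ (1 / 2 + α : ℝ) ≠ 0 := by
      simp only [ne_eq, ENNReal.rpow_eq_zero_iff, not_or, not_and]
      exact ⟨fun h => absurd h h0, fun h => absurd h (measure_ne_top μ _)⟩
    have hdnt : μ (A n) ^ (1 / 2 + α : ℝ) ≠ ⊤ :=
      ENNReal.rpow_ne_top_of_nonneg (by linarith) (measure_ne_top μ _)
    have h1 : X ^ (1 / 2 : ℝ) ≤ B * μ (A n) ^ (1 / 2 + α : ℝ) :=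
      (ENNReal.div_le_iff hdne hdnt).mp hle
    have h2 := ENNReal.rpow_le_rpow h1 (by norm_num : (0 : ℝ) ≤ 2)
    rw [← ENNReal.rpow_mul, ENNReal.mul_rpow_of_nonneg _ _ (by norm_num : (0 : ℝ) ≤ 2),
      ← ENNReal.rpow_mul] at h2
    calc X = X ^ ((1 / 2 : ℝ) * 2) := by norm_num
      _ ≤ B ^ (2 : ℝ) * μ (A n) ^ ((1 / 2 + α) * 2 : ℝ) := h2
      _ = B ^ 2 * μ (A n) ^ (1 + 2 * α : ℝ) := by
          rw [show ((1 / 2 + α) * 2 : ℝ) = 1 + 2 * α by ring,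
            show (2 : ℝ) = ((2 : ℕ) : ℝ) by norm_num, ENNReal.rpow_natCast]
  -- decompose the integral
  have hcongr : ∀ n, (∫⁻ ω in A n, (‖g ω - predVal f (τ ω).toNat ω‖₊ : ℝ≥0∞) ^ 2 ∂μ)
      = ∫⁻ ω in A n, (‖g ω - predVal f n ω‖₊ : ℝ≥0∞) ^ 2 ∂μ := by
    intro n
    refine setLIntegral_congr_fun (hAmeas0 n) (fun ω hω => ?_)
    simp only [hA, Set.mem_setOf_eq] at hω
    rw [hω, ENat.toNat_coe]
  have hdecomp : (∫⁻ ω in {ω | τ ω < ⊤}, (‖g ω - predVal f (τ ω).toNat ω‖₊ : ℝ≥0∞) ^ 2 ∂μ)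
      = ∑' n, ∫⁻ ω in A n, (‖g ω - predVal f n ω‖₊ : ℝ≥0∞) ^ 2 ∂μ := by
    rw [hUnion, lintegral_iUnion hAmeas0 hdisj]
    exact tsum_congr hcongr
  have hsum : (∫⁻ ω in {ω | τ ω < ⊤}, (‖g ω - predVal f (τ ω).toNat ω‖₊ : ℝ≥0∞) ^ 2 ∂μ)
      ≤ B ^ 2 * μ {ω | τ ω < ⊤} ^ (1 + 2 * α : ℝ) := by
    rw [hdecomp]
    calc ∑' n, ∫⁻ ω in A n, (‖g ω - predVal f n ω‖₊ : ℝ≥0∞) ^ 2 ∂μ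
        ≤ ∑' n, B ^ 2 * μ (A n) ^ (1 + 2 * α : ℝ) := ENNReal.tsum_le_tsum hbound
      _ = B ^ 2 * ∑' n, μ (A n) ^ (1 + 2 * α : ℝ) := ENNReal.tsum_mul_left
      _ ≤ B ^ 2 * (∑' n, μ (A n)) ^ (1 + 2 * α : ℝ) :=
          mul_le_mul_right (tsum_rpow_le _ hp1) _
      _ = B ^ 2 * μ {ω | τ ω < ⊤} ^ (1 + 2 * α : ℝ) := by
          rw [← measure_iUnion hdisj hAmeas0, ← hUnion]
  exact ENNReal.div_le_of_le_mul hsum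
end
end

section
/- Let f be an L²-martingale with f ∈ BMO^α. Then for every n ≥ 1 and every A ∈ F_n, P(A)^{-1-2α} ∫_A Σ_{k=n}^∞ |d_k f|² dP ≤ C ‖f‖²_{BMO^α} for an absolute constant C. Consequently the measure |d_k f|² dP⊗dm is a bounded α-Carleson measure. -/
open MeasureTheory ENNReal Set
open scoped Classical NNReal

noncomputable section

namespace Stmt3Aux

variable {Ω : Type} {m0 : MeasurableSpace Ω} {μ : Measure Ω} [IsProbabilityMeasure μ]
  {ℱ : Filtration ℕ m0} {f : ℕ → Ω → ℝ} {g : Ω → ℝ}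

lemma memLp2_condexp (i : ℕ) (hg : MemLp g 2 μ) :
    MemLp (μ[g|ℱ i]) 2 μ := by
  have hm : (ℱ i : MeasurableSpace Ω) ≤ m0 := ℱ.le i
  haveI : SigmaFinite (μ.trim hm) := inferInstance
  set G : Lp ℝ 2 μ := hg.toLp g with hG
  have h : (condExpL2 ℝ ℝ hm G : Ω → ℝ) =ᵐ[μ] μ[g|ℱ i] := by
    refine ae_eq_condExp_of_forall_setIntegral_eq hm (hg.integrable one_le_two)
      (fun s _ hμs => ?_) (fun s hs hμs => ?_) ?_
    · exact integrableOn_condExpL2_of_measure_ne_top hm hμs.ne G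
    · rw [integral_condExpL2_eq hm G hs hμs.ne]
      exact setIntegral_congr_ae (hm s hs) ((hg.coeFn_toLp).mono fun x hx _ => hx)
    · exact aestronglyMeasurable_condExpL2 hm G
  exact (Lp.memLp ((condExpL2 ℝ ℝ hm G : lpMeas ℝ ℝ (ℱ i) 2 μ) : Lp ℝ 2 μ)).ae_eq h

lemma integrable_mul2 {u v : Ω → ℝ} (hu : MemLp u 2 μ) (hv : MemLp v 2 μ) :
    Integrable (fun ω => u ω * v ω) μ := by
  have h : (fun ω => u ω * v ω)
      = fun ω => ((u ω + v ω) ^ 2 - u ω ^ 2 - v ω ^ 2) / 2 := by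
    funext ω; ring
  rw [h]
  exact (((hu.add hv).integrable_sq.sub hu.integrable_sq).sub hv.integrable_sq).div_const 2

section Mart

variable (hf : Martingale f ℱ μ) (hg : MemLp g 2 μ) (hfg : ∀ n, f n =ᵐ[μ] μ[g|ℱ n])

include hg hfg in
lemma memLp_f (m : ℕ) : MemLp (f m) 2 μ :=
  (memLp2_condexp m hg).ae_eq (hfg m).symm

include hg hfg in
lemma memLp_pred (n : ℕ) : MemLp (predVal f n) 2 μ := by
  cases n with
  | zero => unfold predVal; simpa using memLp_const (μ := μ) (0 : ℝ)
  | succ k => unfold predVal; simpa using memLp_f hg hfg k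

include hg hfg in
lemma memLp_mdiff (k : ℕ) : MemLp (mdiff f k) 2 μ := by
  cases k with
  | zero => unfold mdiff; simpa using memLp_f hg hfg 0
  | succ j =>
      unfold mdiff; simp; exact (memLp_f hg hfg (j + 1)).sub (memLp_f hg hfg j)

include hf in
lemma sm_pred {n m : ℕ} (hnm : n ≤ m + 1) : StronglyMeasurable[ℱ m] (predVal f n) := by
  cases n with
  | zero => unfold predVal; simpa using stronglyMeasurable_const
  | succ k =>
      have hk : k ≤ m := by omega
      unfold predVal; simpa using (hf.stronglyAdapted k).mono (ℱ.mono hk)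

/-- Pull-out: integrating an `ℱ m`-measurable `L²` function against a conditional
expectation over a set `A ∈ ℱ m`. -/
lemma integral_mul_condexp {m : ℕ} {A : Set Ω} (hA : MeasurableSet[ℱ m] A)
    {φ q : Ω → ℝ} (hφm : StronglyMeasurable[ℱ m] φ) (hφ : MemLp φ 2 μ)
    (hq : MemLp q 2 μ) :
    ∫ ω in A, φ ω * (μ[q|ℱ m]) ω ∂μ = ∫ ω in A, φ ω * q ω ∂μ := by
  have hint : Integrable (fun ω => φ ω * q ω) μ := integrable_mul2 hφ hq
  have hint' : Integrable (φ * q) μ := hint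
  have h1 : μ[φ * q|ℱ m] =ᵐ[μ] φ * μ[q|ℱ m] :=
    condExp_mul_of_stronglyMeasurable_left hφm hint' (hq.integrable one_le_two)
  have h2 : ∫ ω in A, φ ω * (μ[q|ℱ m]) ω ∂μ = ∫ ω in A, (μ[φ * q|ℱ m]) ω ∂μ :=
    setIntegral_congr_ae (ℱ.le m A hA) (h1.mono fun x hx _ => hx.symm)
  rw [h2, setIntegral_condExp (ℱ.le m) hint' hA]
  rfl

include hg hfg in
/-- For `j ≥ m`, `∫_A φ f_j = ∫_A φ g` for `ℱ m`-measurable `L²` `φ` and `A ∈ ℱ m`. -/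
lemma integral_mul_f {m j : ℕ} (hmj : m ≤ j) {A : Set Ω} (hA : MeasurableSet[ℱ m] A)
    {φ : Ω → ℝ} (hφm : StronglyMeasurable[ℱ m] φ) (hφ : MemLp φ 2 μ) :
    ∫ ω in A, φ ω * f j ω ∂μ = ∫ ω in A, φ ω * g ω ∂μ := by
  have hA' : MeasurableSet[ℱ j] A := ℱ.mono hmj A hA
  have hφm' : StronglyMeasurable[ℱ j] φ := hφm.mono (ℱ.mono hmj)
  have h1 : ∫ ω in A, φ ω * f j ω ∂μ = ∫ ω in A, φ ω * (μ[g|ℱ j]) ω ∂μ :=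
    setIntegral_congr_ae (ℱ.le j A hA')
      ((hfg j).mono fun x hx _ => by rw [hx])
  rw [h1, integral_mul_condexp hA' hφm' hφ hg]

include hf hg hfg in
lemma cross_g {n m : ℕ} (hnm : n ≤ m) {A : Set Ω} (hA : MeasurableSet[ℱ n] A) :
    ∫ ω in A, (f m ω - predVal f n ω) * (g ω - f m ω) ∂μ = 0 := by
  have hAm : MeasurableSet[ℱ m] A := ℱ.mono hnm A hA
  have hφm : StronglyMeasurable[ℱ m] (fun ω => f m ω - predVal f n ω) :=
    (hf.stronglyAdapted m).sub (sm_pred hf (by omega))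
  have hφ : MemLp (fun ω => f m ω - predVal f n ω) 2 μ :=
    (memLp_f hg hfg m).sub (memLp_pred hg hfg n)
  have hfm : MemLp (f m) 2 μ := memLp_f hg hfg m
  simp_rw [mul_sub]
  rw [integral_sub ((integrable_mul2 hφ hg).integrableOn)
      ((integrable_mul2 hφ hfm).integrableOn),
    integral_mul_f hg hfg le_rfl hAm hφm hφ, sub_self]

include hf hg hfg in
lemma cross_step {n m : ℕ} (hnm : n ≤ m) {A : Set Ω} (hA : MeasurableSet[ℱ n] A) :
    ∫ ω in A, (f m ω - predVal f n ω) * (f (m + 1) ω - f m ω) ∂μ = 0 := by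
  have hAm : MeasurableSet[ℱ m] A := ℱ.mono hnm A hA
  have hφm : StronglyMeasurable[ℱ m] (fun ω => f m ω - predVal f n ω) :=
    (hf.stronglyAdapted m).sub (sm_pred hf (by omega))
  have hφ : MemLp (fun ω => f m ω - predVal f n ω) 2 μ :=
    (memLp_f hg hfg m).sub (memLp_pred hg hfg n)
  simp_rw [mul_sub]
  rw [integral_sub ((integrable_mul2 hφ (memLp_f hg hfg (m + 1))).integrableOn)
      ((integrable_mul2 hφ (memLp_f hg hfg m)).integrableOn),
    integral_mul_f hg hfg (Nat.le_succ m) hAm hφm hφ,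
    integral_mul_f hg hfg le_rfl hAm hφm hφ, sub_self]

include hg hfg in
lemma int_sq {u : Ω → ℝ} (hu : MemLp u 2 μ) (A : Set Ω) :
    Integrable (fun ω => u ω ^ 2) (μ.restrict A) :=
  hu.integrable_sq.integrableOn

include hf hg hfg in
lemma sum_sq_eq {n : ℕ} {A : Set Ω} (hA : MeasurableSet[ℱ n] A) :
    ∀ m, n ≤ m → ∑ k ∈ Finset.Icc n m, ∫ ω in A, (mdiff f k ω) ^ 2 ∂μ
      = ∫ ω in A, (f m ω - predVal f n ω) ^ 2 ∂μ := by
  intro m hm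
  induction m, hm using Nat.le_induction with
  | base =>
      rw [Finset.Icc_self, Finset.sum_singleton]
      have hd : ∀ ω, mdiff f n ω = f n ω - predVal f n ω := fun ω => by
        by_cases h : n = 0 <;> simp [mdiff, predVal, h]
      simp only [hd]
  | succ m hm ih =>
      rw [Finset.sum_Icc_succ_top (by omega : n ≤ m + 1), ih]
      have hd : ∀ ω, mdiff f (m + 1) ω = f (m + 1) ω - f m ω := fun ω => by
        simp [mdiff]
      simp only [hd]
      have hu : MemLp (fun ω => f m ω - predVal f n ω) 2 μ :=
        (memLp_f hg hfg m).sub (memLp_pred hg hfg n)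
      have hv : MemLp (fun ω => f (m + 1) ω - f m ω) 2 μ :=
        (memLp_f hg hfg (m + 1)).sub (memLp_f hg hfg m)
      have key : ∫ ω in A, (f (m + 1) ω - predVal f n ω) ^ 2 ∂μ
          = ∫ ω in A, ((f m ω - predVal f n ω) ^ 2
            + ((f (m + 1) ω - f m ω) ^ 2
              + 2 * ((f m ω - predVal f n ω) * (f (m + 1) ω - f m ω)))) ∂μ :=
        integral_congr_ae (Filter.Eventually.of_forall fun ω => by ring)
      have hcr : Integrable
          (fun ω => 2 * ((f m ω - predVal f n ω) * (f (m + 1) ω - f m ω)))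
          (μ.restrict A) :=
        ((integrable_mul2 hu hv).integrableOn).const_mul 2
      have hsum : Integrable (fun ω => (f (m + 1) ω - f m ω) ^ 2
          + 2 * ((f m ω - predVal f n ω) * (f (m + 1) ω - f m ω))) (μ.restrict A) :=
        (int_sq hg hfg hv A).add hcr
      rw [key, integral_add (int_sq hg hfg hu A) hsum,
        integral_add (int_sq hg hfg hv A) hcr, integral_const_mul 2 _,
        cross_step hf hg hfg hm hA, mul_zero, add_zero]

include hf hg hfg in
lemma sum_sq_le {n : ℕ} {A : Set Ω} (hA : MeasurableSet[ℱ n] A) {m : ℕ} (hm : n ≤ m) :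
    ∑ k ∈ Finset.Icc n m, ∫ ω in A, (mdiff f k ω) ^ 2 ∂μ
      ≤ ∫ ω in A, (g ω - predVal f n ω) ^ 2 ∂μ := by
  rw [sum_sq_eq hf hg hfg hA m hm]
  have hu : MemLp (fun ω => f m ω - predVal f n ω) 2 μ :=
    (memLp_f hg hfg m).sub (memLp_pred hg hfg n)
  have hv : MemLp (fun ω => g ω - f m ω) 2 μ := hg.sub (memLp_f hg hfg m)
  have key : ∫ ω in A, (g ω - predVal f n ω) ^ 2 ∂μ
      = ∫ ω in A, ((f m ω - predVal f n ω) ^ 2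
        + ((g ω - f m ω) ^ 2
          + 2 * ((f m ω - predVal f n ω) * (g ω - f m ω)))) ∂μ :=
    integral_congr_ae (Filter.Eventually.of_forall fun ω => by ring)
  have hcr : Integrable
      (fun ω => 2 * ((f m ω - predVal f n ω) * (g ω - f m ω))) (μ.restrict A) :=
    ((integrable_mul2 hu hv).integrableOn).const_mul 2
  have hnn : 0 ≤ ∫ ω in A, (g ω - f m ω) ^ 2 ∂μ :=
    integral_nonneg fun ω => sq_nonneg _
  have hsum : Integrable (fun ω => (g ω - f m ω) ^ 2
      + 2 * ((f m ω - predVal f n ω) * (g ω - f m ω))) (μ.restrict A) :=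
    (int_sq hg hfg hv A).add hcr
  rw [key, integral_add (int_sq hg hfg hu A) hsum,
    integral_add (int_sq hg hfg hv A) hcr, integral_const_mul 2 _,
    cross_g hf hg hfg hm hA, mul_zero, add_zero]
  linarith

end Mart

lemma lint_sq_eq {q : Ω → ℝ} (hq : MemLp q 2 μ) (A : Set Ω) :
    ∫⁻ ω in A, ((‖q ω‖₊ : ℝ≥0∞)) ^ 2 ∂μ = ENNReal.ofReal (∫ ω in A, q ω ^ 2 ∂μ) := by
  have h1 : ∀ ω, ((‖q ω‖₊ : ℝ≥0∞)) ^ 2 = ENNReal.ofReal (q ω ^ 2) := fun ω => by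
    rw [← enorm_eq_nnnorm, Real.enorm_eq_ofReal_abs, ← ENNReal.ofReal_pow (abs_nonneg _), sq_abs]
  rw [lintegral_congr h1,
    ofReal_integral_eq_lintegral_ofReal hq.integrable_sq.integrableOn
      (Filter.Eventually.of_forall fun ω => sq_nonneg _)]

lemma bmo_bound {α : ℝ} (hα : 0 ≤ α) (n : ℕ) {A : Set Ω} (hA : MeasurableSet[ℱ n] A) :
    ∫⁻ ω in A, ((‖g ω - predVal f n ω‖₊ : ℝ≥0∞)) ^ 2 ∂μ
      ≤ bmoNorm μ ℱ α f g ^ 2 * μ A ^ (1 + 2 * α : ℝ) := by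
  set N := bmoNorm μ ℱ α f g with hN
  set x := ∫⁻ ω in A, ((‖g ω - predVal f n ω‖₊ : ℝ≥0∞)) ^ 2 ∂μ with hx
  by_cases hA0 : μ A = 0
  · have : μ.restrict A = 0 := Measure.restrict_eq_zero.mpr hA0
    simp [hx, this]
  have hAt : μ A ≠ ⊤ := (measure_lt_top μ A).ne
  have hy0 : μ A ^ (1 / 2 + α : ℝ) ≠ 0 := by
    simp [ENNReal.rpow_eq_zero_iff, hA0, hAt]
  have hyt : μ A ^ (1 / 2 + α : ℝ) ≠ ⊤ := by
    simp [ENNReal.rpow_eq_top_iff, hA0, hAt]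
  have hle : x ^ (1 / 2 : ℝ) / μ A ^ (1 / 2 + α : ℝ) ≤ N := by
    rw [hN, bmoNorm]
    refine le_iSup_of_le n ?_
    refine le_iSup_of_le A ?_
    exact le_iSup_of_le hA le_rfl
  have hle2 : x ^ (1 / 2 : ℝ) ≤ N * μ A ^ (1 / 2 + α : ℝ) :=
    (ENNReal.div_le_iff hy0 hyt).mp hle
  have hxeq : x = (x ^ (1 / 2 : ℝ)) ^ 2 := by
    rw [← ENNReal.rpow_natCast (x ^ (1 / 2 : ℝ)) 2, ← ENNReal.rpow_mul]
    norm_num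
  calc x = (x ^ (1 / 2 : ℝ)) ^ 2 := hxeq
    _ ≤ (N * μ A ^ (1 / 2 + α : ℝ)) ^ 2 := by
        rw [sq, sq]; exact mul_le_mul' hle2 hle2
    _ = N ^ 2 * μ A ^ (1 + 2 * α : ℝ) := by
        rw [mul_pow]
        congr 1
        rw [← ENNReal.rpow_natCast (μ A ^ (1 / 2 + α : ℝ)) 2, ← ENNReal.rpow_mul]
        norm_num
        ring_nf

section Mart2

variable (hf : Martingale f ℱ μ) (hg : MemLp g 2 μ) (hfg : ∀ n, f n =ᵐ[μ] μ[g|ℱ n])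

include hf hg hfg in
lemma measurable_mdiff_sq (k : ℕ) :
    Measurable fun ω => ((‖mdiff f k ω‖₊ : ℝ≥0∞)) ^ 2 := by
  have hm : Measurable (mdiff f k) := by
    cases k with
    | zero =>
        unfold mdiff; simpa using ((hf.stronglyAdapted 0).measurable.mono (ℱ.le 0) le_rfl)
    | succ j =>
        have h1 : Measurable (f (j + 1)) :=
          (hf.stronglyAdapted (j + 1)).measurable.mono (ℱ.le (j + 1)) le_rfl
        have h2 : Measurable (f j) := (hf.stronglyAdapted j).measurable.mono (ℱ.le j) le_rfl
        unfold mdiff; simp; exact h1.sub h2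
  exact hm.enorm.pow_const 2

include hf hg hfg in
/-- The key estimate, for every `n : ℕ` (including `n = 0`). -/
lemma key_bound {α : ℝ} (hα : 0 ≤ α) (n : ℕ) {A : Set Ω} (hA : MeasurableSet[ℱ n] A) :
    (∫⁻ ω in A, ∑' k : ℕ, (if n ≤ k then ((‖mdiff f k ω‖₊ : ℝ≥0∞)) ^ 2 else 0) ∂μ)
      ≤ bmoNorm μ ℱ α f g ^ 2 * μ A ^ (1 + 2 * α : ℝ) := by
  refine le_trans ?_ (bmo_bound hα n hA)
  have hmeas : ∀ k : ℕ, AEMeasurable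
      (fun ω => if n ≤ k then ((‖mdiff f k ω‖₊ : ℝ≥0∞)) ^ 2 else 0) (μ.restrict A) := by
    intro k
    by_cases hk : n ≤ k
    · simpa [hk] using (measurable_mdiff_sq hf hg hfg k).aemeasurable
    · simpa [hk] using aemeasurable_const (b := (0 : ℝ≥0∞))
  rw [lintegral_tsum hmeas, ENNReal.tsum_eq_iSup_sum]
  refine iSup_le fun s => ?_
  set M := max n (s.sup id) with hM
  have hnM : n ≤ M := le_max_left _ _
  calc ∑ k ∈ s, ∫⁻ ω in A, (if n ≤ k then ((‖mdiff f k ω‖₊ : ℝ≥0∞)) ^ 2 else 0) ∂μ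
      ≤ ∑ k ∈ Finset.Icc n M, ∫⁻ ω in A, ((‖mdiff f k ω‖₊ : ℝ≥0∞)) ^ 2 ∂μ := by
        rw [← Finset.sum_filter_add_sum_filter_not s (fun k => n ≤ k)]
        have h0 : ∑ k ∈ s.filter (fun k => ¬ n ≤ k),
            ∫⁻ ω in A, (if n ≤ k then ((‖mdiff f k ω‖₊ : ℝ≥0∞)) ^ 2 else 0) ∂μ = 0 := by
          refine Finset.sum_eq_zero fun k hk => ?_
          rw [Finset.mem_filter] at hk
          simp [hk.2]
        rw [h0, add_zero]
        have hsub : s.filter (fun k => n ≤ k) ⊆ Finset.Icc n M := by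
          intro k hk
          rw [Finset.mem_filter] at hk
          refine Finset.mem_Icc.mpr ⟨hk.2, ?_⟩
          exact le_trans (Finset.le_sup (f := id) hk.1) (le_max_right _ _)
        calc ∑ k ∈ s.filter (fun k => n ≤ k),
              ∫⁻ ω in A, (if n ≤ k then ((‖mdiff f k ω‖₊ : ℝ≥0∞)) ^ 2 else 0) ∂μ
            = ∑ k ∈ s.filter (fun k => n ≤ k),
              ∫⁻ ω in A, ((‖mdiff f k ω‖₊ : ℝ≥0∞)) ^ 2 ∂μ := by
              refine Finset.sum_congr rfl fun k hk => ?_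
              rw [Finset.mem_filter] at hk
              simp [hk.2]
          _ ≤ _ := Finset.sum_le_sum_of_subset hsub
    _ = ENNReal.ofReal (∑ k ∈ Finset.Icc n M, ∫ ω in A, (mdiff f k ω) ^ 2 ∂μ) := by
        rw [ENNReal.ofReal_sum_of_nonneg
          (fun k _ => integral_nonneg fun ω => sq_nonneg _)]
        exact Finset.sum_congr rfl fun k _ => lint_sq_eq (memLp_mdiff hg hfg k) A
    _ ≤ ENNReal.ofReal (∫ ω in A, (g ω - predVal f n ω) ^ 2 ∂μ) :=
        ENNReal.ofReal_le_ofReal (sum_sq_le hf hg hfg hA hnM)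
    _ = ∫⁻ ω in A, ((‖g ω - predVal f n ω‖₊ : ℝ≥0∞)) ^ 2 ∂μ :=
        (lint_sq_eq (hg.sub (memLp_pred hg hfg n)) A).symm

include hf hg hfg in
lemma measurable_tail (n : ℕ) :
    Measurable fun ω => ∑' k : ℕ, (if n ≤ k then ((‖mdiff f k ω‖₊ : ℝ≥0∞)) ^ 2 else 0) := by
  refine Measurable.ennreal_tsum fun k => ?_
  by_cases hk : n ≤ k
  · simpa [hk] using measurable_mdiff_sq hf hg hfg k
  · simpa [hk] using measurable_const (a := (0 : ℝ≥0∞))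

end Mart2

lemma stop_eq_meas {τ : Ω → ℕ∞} (hτ : IsStopTime ℱ τ) (n : ℕ) :
    MeasurableSet[ℱ n] {ω | τ ω = (n : ℕ∞)} := by
  cases n with
  | zero =>
      have h : {ω | τ ω = ((0 : ℕ) : ℕ∞)} = {ω | τ ω ≤ ((0 : ℕ) : ℕ∞)} := by
        ext ω; simp [le_zero_iff]
      rw [h]; exact hτ 0
  | succ n =>
      have h : {ω | τ ω = ((n + 1 : ℕ) : ℕ∞)}
          = {ω | τ ω ≤ ((n + 1 : ℕ) : ℕ∞)} \ {ω | τ ω ≤ ((n : ℕ) : ℕ∞)} := by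
        ext ω
        simp only [Set.mem_setOf_eq, Set.mem_diff]
        cases hv : τ ω with
        | top => simp; exact fun h => absurd h.symm (by exact_mod_cast ENat.coe_ne_top (n + 1))
        | coe m =>
            simp only [Nat.cast_inj, Nat.cast_le]
            constructor
            · rintro rfl; exact ⟨le_rfl, by omega⟩
            · rintro ⟨h1, h2⟩
              rw [show ((m : ℕ) : ℕ∞) = ((m : ℕ) : ℕ∞) from rfl] at *
              have h1' : m ≤ n + 1 := by exact_mod_cast h1
              have h2' : ¬ m ≤ n := fun hc => h2 (by exact_mod_cast hc)
              congr
              omega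
      rw [h]
      exact (hτ (n + 1)).diff ((ℱ.mono (Nat.le_succ n)) _ (hτ n))

section Mart3

variable (hf : Martingale f ℱ μ) (hg : MemLp g 2 μ) (hfg : ∀ n, f n =ᵐ[μ] μ[g|ℱ n])

include hf hg hfg in
lemma carleson_bound {α : ℝ} (hα : 0 ≤ α) {τ : Ω → ℕ∞} (hτ : IsStopTime ℱ τ) :
    tentMass μ (fun k ω => ((‖mdiff f k ω‖₊ : ℝ≥0∞)) ^ 2) τ
      ≤ bmoNorm μ ℱ α f g ^ 2 * μ {ω | τ ω < ⊤} ^ (1 + 2 * α : ℝ) := by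
  classical
  set N := bmoNorm μ ℱ α f g with hN
  set E : ℕ → Set Ω := fun n => {ω | τ ω = (n : ℕ∞)} with hE
  set S : Set Ω := {ω | τ ω < ⊤} with hSdef
  have hEmeas : ∀ n, MeasurableSet (E n) := fun n => ℱ.le n _ (stop_eq_meas hτ n)
  have hsub : ∀ n, E n ⊆ S := fun n ω h => by
    have h' : τ ω = (n : ℕ∞) := h
    show τ ω < ⊤
    rw [h']
    exact WithTop.coe_lt_top n
  have hS : S = ⋃ n, E n := by
    ext ω
    simp only [hSdef, hE, Set.mem_setOf_eq, Set.mem_iUnion, lt_top_iff_ne_top]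
    exact ⟨fun h => (WithTop.ne_top_iff_exists.mp h).imp fun n hn => hn.symm,
      fun ⟨n, hn⟩ => by rw [hn]; exact WithTop.coe_ne_top⟩
  have hpt : ∀ ω, (∑' k : ℕ, if τ ω ≤ (k : ℕ∞) ∧ τ ω < ⊤
        then ((‖mdiff f k ω‖₊ : ℝ≥0∞)) ^ 2 else 0)
      = ∑' n : ℕ, Set.indicator (E n)
          (fun ω => ∑' k : ℕ, if n ≤ k then ((‖mdiff f k ω‖₊ : ℝ≥0∞)) ^ 2 else 0) ω := by
    intro ω
    cases hv : τ ω with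
    | top =>
        have h1 : ∀ k : ℕ, ¬(τ ω ≤ (k : ℕ∞) ∧ τ ω < ⊤) := fun k h => by
          rw [hv] at h; exact absurd h.2 (lt_irrefl ⊤)
        have h2 : ∀ n : ℕ, ω ∉ E n := fun n h => by
          have h' : τ ω = (n : ℕ∞) := h
          rw [hv] at h'
          exact (WithTop.top_ne_coe).elim (by exact_mod_cast h')
        simp [h1, Set.indicator_of_notMem, h2]
    | coe m =>
        have hmem : ω ∈ E m := hv
        have hzero : ∀ n : ℕ, n ≠ m → Set.indicator (E n)
            (fun ω => ∑' k : ℕ, if n ≤ k then ((‖mdiff f k ω‖₊ : ℝ≥0∞)) ^ 2 else 0) ω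
              = 0 := by
          intro n hn
          have hnm : ω ∉ E n := fun h => by
            have h' : τ ω = (n : ℕ∞) := h
            rw [hv] at h'
            exact hn (by exact_mod_cast h'.symm)
          rw [Set.indicator_of_notMem hnm]
        have hre : (∑' n : ℕ, Set.indicator (E n)
            (fun ω => ∑' k : ℕ, if n ≤ k then ((‖mdiff f k ω‖₊ : ℝ≥0∞)) ^ 2 else 0) ω)
            = Set.indicator (E m)
              (fun ω => ∑' k : ℕ, if m ≤ k then ((‖mdiff f k ω‖₊ : ℝ≥0∞)) ^ 2 else 0) ω :=
          tsum_eq_single m hzero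
        rw [hre, Set.indicator_of_mem hmem]
        refine tsum_congr fun k => ?_
        have hiff : (((m : ℕ) : ℕ∞) ≤ (k : ℕ∞) ∧ ((m : ℕ) : ℕ∞) < ⊤) ↔ m ≤ k := by
          simp [Nat.cast_le, WithTop.coe_lt_top]
        by_cases hmk : m ≤ k
        · rw [if_pos (hiff.mpr hmk), if_pos hmk]
        · rw [if_neg (fun hc => hmk (hiff.mp hc)), if_neg hmk]
  have hinner : ∀ n : ℕ, Measurable fun ω =>
      ∑' k : ℕ, (if n ≤ k then ((‖mdiff f k ω‖₊ : ℝ≥0∞)) ^ 2 else 0) :=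
    measurable_tail hf hg hfg
  calc tentMass μ (fun k ω => ((‖mdiff f k ω‖₊ : ℝ≥0∞)) ^ 2) τ
      = ∑' n : ℕ, ∫⁻ ω in E n,
          ∑' k : ℕ, (if n ≤ k then ((‖mdiff f k ω‖₊ : ℝ≥0∞)) ^ 2 else 0) ∂μ := by
        rw [tentMass, lintegral_congr hpt,
          lintegral_tsum fun n => ((hinner n).indicator (hEmeas n)).aemeasurable]
        exact tsum_congr fun n => lintegral_indicator (hEmeas n) _
    _ ≤ ∑' n : ℕ, N ^ 2 * (μ S ^ (2 * α : ℝ) * μ (E n)) := by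
        refine ENNReal.tsum_le_tsum fun n => ?_
        refine le_trans (key_bound hf hg hfg hα n (stop_eq_meas hτ n)) ?_
        rw [hN]
        refine mul_le_mul_right ?_ _
        by_cases h0 : μ (E n) = 0
        · rw [h0, ENNReal.zero_rpow_of_pos (by linarith), mul_zero]
        · rw [ENNReal.rpow_add 1 (2 * α) h0 (measure_lt_top μ (E n)).ne,
            ENNReal.rpow_one, mul_comm]
          exact mul_le_mul_left (ENNReal.rpow_le_rpow (measure_mono (hsub n))
            (by linarith)) _
    _ = N ^ 2 * (μ S ^ (2 * α : ℝ) * μ S) := by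
        rw [ENNReal.tsum_mul_left]
        congr 1
        rw [ENNReal.tsum_mul_left]
        congr 1
        rw [hS, measure_iUnion ?_ hEmeas]
        intro i j hij
        refine Set.disjoint_left.mpr fun ω hi hj => ?_
        have hi' : τ ω = (i : ℕ∞) := hi
        have hj' : τ ω = (j : ℕ∞) := hj
        exact hij (by exact_mod_cast hi'.symm.trans hj')
    _ = N ^ 2 * μ S ^ (1 + 2 * α : ℝ) := by
        congr 1
        by_cases h0 : μ S = 0
        · rw [h0, mul_zero, ENNReal.zero_rpow_of_pos (by linarith)]
        · rw [ENNReal.rpow_add 1 (2 * α) h0 (measure_lt_top μ S).ne,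
            ENNReal.rpow_one, mul_comm]

end Mart3

end Stmt3Aux

/-- if `f ∈ BMO^α`, then for every `n ≥ 1` and `A ∈ F_n`,
`P(A)^{-1-2α} ∫_A Σ_{k=n}^∞ |d_k f|² dP ≤ C ‖f‖²_{BMO^α}` (absolute constant `C`),
and consequently `|d_k f|² dP ⊗ dm` is a bounded `α`-Carleson measure. -/
theorem stmt3 :
    ∃ C : ℝ≥0∞, 0 < C ∧ C < ⊤ ∧
      ∀ {Ω : Type} {m0 : MeasurableSpace Ω} (μ : Measure Ω)
        [IsProbabilityMeasure μ] (ℱ : Filtration ℕ m0)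
        (α : ℝ), 0 ≤ α → α ≤ 1 →
        ∀ (f : ℕ → Ω → ℝ) (g : Ω → ℝ), Martingale f ℱ μ → MemLp g 2 μ →
          (∀ n, f n =ᵐ[μ] μ[g | ℱ n]) →
          bmoNorm μ ℱ α f g < ⊤ →
          (∀ n : ℕ, 1 ≤ n → ∀ A : Set Ω, MeasurableSet[ℱ n] A →
            (∫⁻ ω in A, ∑' k : ℕ, (if n ≤ k then (‖mdiff f k ω‖₊ : ℝ≥0∞) ^ 2 else 0) ∂μ)
              ≤ C * bmoNorm μ ℱ α f g ^ 2 * μ A ^ (1 + 2*α : ℝ)) ∧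
          carlesonNorm μ ℱ α (fun k ω => (‖mdiff f k ω‖₊ : ℝ≥0∞) ^ 2)
            ≤ C * bmoNorm μ ℱ α f g ^ 2 := by
  refine ⟨1, zero_lt_one, ENNReal.one_lt_top, ?_⟩
  intro Ω m0 μ inst ℱ α hα0 _hα1 f g hf hg hfg _hbmo
  refine ⟨fun n _ A hA => ?_, ?_⟩
  · rw [one_mul]
    exact Stmt3Aux.key_bound hf hg hfg hα0 n hA
  · rw [one_mul, carlesonNorm]
    exact iSup_le fun τ => iSup_le fun hτ =>
      ENNReal.div_le_of_le_mul (Stmt3Aux.carleson_bound hf hg hfg hα0 hτ)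
end
end

section
/- Let dμ = μ_k dP⊗dm be a bounded α-Carleson measure with 0 < α < 1, and 1 < p < ∞. Then for every adapted process f = (f_n)_{n≥0}, ∫_{Ω×ℕ} |f_k|^p μ_k dP⊗dm ≤ (p/(p-1)) ‖|μ|‖_α ‖Mf‖_{L^{1/(2α)}} ‖Mf‖^{p-1}_{L^{p-1}}, where Mf = sup_n |f_n| is the maximal function. -/
open MeasureTheory ENNReal Set
open scoped Classical NNReal

noncomputable section

/-- Carleson embedding inequality. For a bounded `α`-Carleson measure
`μ_k dP ⊗ dm` (`0 < α < 1`), `1 < p < ∞`, and any adapted process `f`,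
`∫ |f_k|^p μ_k dP⊗dm ≤ (p/(p-1)) ‖|μ|‖_α ‖Mf‖_{L^{1/(2α)}} ‖Mf‖^{p-1}_{L^{p-1}}`. -/
theorem stmt5 {Ω : Type*} {m0 : MeasurableSpace Ω} (μ : Measure Ω)
    [IsProbabilityMeasure μ] (ℱ : Filtration ℕ m0)
    (α : ℝ) (hα0 : 0 < α) (hα1 : α < 1)
    (w : ℕ → Ω → ℝ≥0∞) (hw : ∀ k, Measurable (w k))
    (hbdd : carlesonNorm μ ℱ α w < ⊤)
    (p : ℝ) (hp : 1 < p)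
    (f : ℕ → Ω → ℝ) (hf : Adapted ℱ f) :
    (∫⁻ ω, ∑' k : ℕ, (‖f k ω‖₊ : ℝ≥0∞) ^ p * w k ω ∂μ)
      ≤ ENNReal.ofReal (p / (p - 1)) * carlesonNorm μ ℱ α w
        * (∫⁻ ω, (⨆ n, (‖f n ω‖₊ : ℝ≥0∞)) ^ (1/(2*α)) ∂μ) ^ (2*α)
        * (∫⁻ ω, (⨆ n, (‖f n ω‖₊ : ℝ≥0∞)) ^ (p - 1) ∂μ) := by
  have hp0 : (0:ℝ) < p := by linarith
  have hp1 : (0:ℝ) < p - 1 := by linarith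
  have hα2 : (0:ℝ) < 2*α := by linarith
  set r : ℝ := 1/(2*α) with hrdef
  have hr0 : 0 < r := by positivity
  set C := carlesonNorm μ ℱ α w with hCdef
  set M : Ω → ℝ≥0∞ := fun ω => ⨆ n, (‖f n ω‖₊ : ℝ≥0∞) with hMdef
  have hfm : ∀ k, Measurable (f k) := fun k => Measurable.mono (hf k) (ℱ.le k) le_rfl
  have hM : Measurable M := Measurable.iSup (fun n => Measurable.enorm (hfm n))
  set J : ℝ≥0∞ := ∫⁻ ω, M ω ^ r ∂μ with hJdef
  set I2 : ℝ≥0∞ := ∫⁻ ω, M ω ^ (p-1) ∂μ with hI2def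
  -- LHS vanishes when the integrand vanishes a.e.
  have hzero : (∀ᵐ ω ∂μ, ∀ k, (‖f k ω‖₊ : ℝ≥0∞) ^ p * w k ω = 0) →
      (∫⁻ ω, ∑' k : ℕ, (‖f k ω‖₊ : ℝ≥0∞) ^ p * w k ω ∂μ) = 0 := by
    intro h
    rw [← lintegral_zero]
    apply lintegral_congr_ae
    filter_upwards [h] with ω hω
    exact ENNReal.tsum_eq_zero.mpr hω
  -- LHS vanishes when M vanishes a.e.
  have hzeroM : (∀ᵐ ω ∂μ, M ω = 0) →
      (∫⁻ ω, ∑' k : ℕ, (‖f k ω‖₊ : ℝ≥0∞) ^ p * w k ω ∂μ) = 0 := by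
    intro h
    apply hzero
    filter_upwards [h] with ω hω k
    have h1 : (‖f k ω‖₊ : ℝ≥0∞) = 0 := le_antisymm (hω ▸ le_iSup (fun n => (‖f n ω‖₊ : ℝ≥0∞)) k) (zero_le)
    rw [h1, ENNReal.zero_rpow_of_pos hp0, zero_mul]
  -- dispose of degenerate cases
  by_cases hC0 : C = 0
  · have hst : IsStopTime ℱ (fun _ => (0:ℕ∞)) := by
      intro n
      show MeasurableSet[ℱ n] {ω : Ω | (0:ℕ∞) ≤ (n:ℕ∞)}
      have h : {ω : Ω | (0:ℕ∞) ≤ (n:ℕ∞)} = (Set.univ : Set Ω) := by ext ω; simp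
      rw [h]; exact MeasurableSet.univ
    have hle : tentMass μ w (fun _ => (0:ℕ∞)) / μ {ω | (0:ℕ∞) < ⊤} ^ ((1 + 2*α : ℝ)) ≤ C := by
      rw [hCdef, carlesonNorm]
      exact le_iSup₂ (f := fun τ (_ : IsStopTime ℱ τ) =>
        tentMass μ w τ / μ {ω | τ ω < ⊤} ^ ((1 + 2*α : ℝ))) (fun _ => (0:ℕ∞)) hst
    have htop : {ω : Ω | (0:ℕ∞) < ⊤} = Set.univ := by ext ω; simp
    have htm : tentMass μ w (fun _ => (0:ℕ∞)) = ∫⁻ ω, ∑' k, w k ω ∂μ := by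
      unfold tentMass
      apply lintegral_congr fun ω => tsum_congr fun k => ?_
      rw [if_pos ⟨zero_le, by simp⟩]
    rw [htop, htm, measure_univ, ENNReal.one_rpow, div_one, hC0] at hle
    have hsum0 : (fun ω => ∑' k, w k ω) =ᵐ[μ] 0 :=
      (lintegral_eq_zero_iff (Measurable.ennreal_tsum hw)).mp (le_antisymm hle (zero_le))
    have : (∫⁻ ω, ∑' k : ℕ, (‖f k ω‖₊ : ℝ≥0∞) ^ p * w k ω ∂μ) = 0 := by
      apply hzero
      filter_upwards [hsum0] with ω hω k
      have : ∑' j, w j ω = 0 := hω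
      rw [ENNReal.tsum_eq_zero.mp this k, mul_zero]
    rw [this]; exact zero_le
  by_cases hJ0 : J = 0
  · have h0 : (fun ω => M ω ^ r) =ᵐ[μ] 0 :=
      (lintegral_eq_zero_iff (hM.pow measurable_const)).mp hJ0
    have hM0 : ∀ᵐ ω ∂μ, M ω = 0 := by
      filter_upwards [h0] with ω hω
      rcases ENNReal.rpow_eq_zero_iff.mp hω with ⟨h, _⟩ | ⟨_, h⟩
      · exact h
      · linarith
    rw [hzeroM hM0]; exact zero_le
  by_cases hI20 : I2 = 0
  · have h0 : (fun ω => M ω ^ (p-1)) =ᵐ[μ] 0 :=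
      (lintegral_eq_zero_iff (hM.pow measurable_const)).mp hI20
    have hM0 : ∀ᵐ ω ∂μ, M ω = 0 := by
      filter_upwards [h0] with ω hω
      rcases ENNReal.rpow_eq_zero_iff.mp hω with ⟨h, _⟩ | ⟨_, h⟩
      · exact h
      · linarith
    rw [hzeroM hM0]; exact zero_le
  have hconst0 : ENNReal.ofReal (p / (p - 1)) ≠ 0 := by
    simp only [ne_eq, ENNReal.ofReal_eq_zero, not_le]
    positivity
  set J1 : ℝ≥0∞ := J ^ (2*α) with hJ1def
  have hJ10 : J1 ≠ 0 := by
    intro h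
    rcases ENNReal.rpow_eq_zero_iff.mp h with ⟨h1, _⟩ | ⟨_, h2⟩
    · exact hJ0 h1
    · linarith
  by_cases hJ1t : J1 = ⊤
  · refine le_trans le_top (le_of_eq ?_)
    rw [hJ1t, ENNReal.mul_top (mul_ne_zero hconst0 hC0), ENNReal.top_mul hI20]
  by_cases hI2t : I2 = ⊤
  · refine le_trans le_top (le_of_eq ?_)
    rw [hI2t]
    rw [ENNReal.mul_top (mul_ne_zero (mul_ne_zero hconst0 hC0) hJ10)]
  -- Main case
  have hCt : C ≠ ⊤ := hbdd.ne
  haveI : SigmaFinite (Measure.count : Measure ℕ) :=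
    ⟨⟨⟨fun n => {n}, fun _ => trivial, fun n => by simp [Measure.count_singleton], by
      ext x; simp⟩⟩⟩
  have hwq : Measurable fun q : Ω × ℕ => w q.2 q.1 :=
    measurable_from_prod_countable_left (fun k => hw k)
  have hFq : Measurable fun q : Ω × ℕ => f q.2 q.1 :=
    measurable_from_prod_countable_left (fun k => hfm k)
  set ν : Measure (Ω × ℕ) := (μ.prod Measure.count).withDensity (fun q => w q.2 q.1) with hνdef
  have hGm : Measurable fun q : Ω × ℕ => ENNReal.ofReal (|f q.2 q.1| ^ p) :=
    (hFq.abs.pow measurable_const).ennreal_ofReal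
  have hLHS : (∫⁻ ω, ∑' k : ℕ, (‖f k ω‖₊ : ℝ≥0∞) ^ p * w k ω ∂μ)
      = ∫⁻ q, ENNReal.ofReal (|f q.2 q.1| ^ p) ∂ν := by
    rw [hνdef, lintegral_withDensity_eq_lintegral_mul _ hwq hGm]
    simp only [Pi.mul_apply]
    rw [lintegral_prod (fun q : Ω × ℕ => w q.2 q.1 * ENNReal.ofReal (|f q.2 q.1| ^ p)) (hwq.mul hGm).aemeasurable]
    refine lintegral_congr fun ω => ?_
    rw [lintegral_count]
    refine tsum_congr fun k => ?_
    simp only [Pi.mul_apply]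
    rw [mul_comm, show ((‖f k ω‖₊ : ℝ≥0∞)) = ENNReal.ofReal |f k ω| from Real.enorm_eq_ofReal_abs _,
      ENNReal.ofReal_rpow_of_nonneg (abs_nonneg _) hp0.le]
  have hmeasset : ∀ t : ℝ, MeasurableSet {q : Ω × ℕ | t < |f q.2 q.1|} := fun t =>
    measurableSet_lt measurable_const hFq.abs
  have hνset : ∀ t : ℝ, ν {q : Ω × ℕ | t < |f q.2 q.1|}
      = ∫⁻ ω, ∑' k, (if t < |f k ω| then w k ω else 0) ∂μ := by
    intro t
    rw [hνdef, withDensity_apply _ (hmeasset t), ← lintegral_indicator (hmeasset t),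
        lintegral_prod _ ((hwq.indicator (hmeasset t))).aemeasurable]
    refine lintegral_congr fun ω => ?_
    rw [lintegral_count]
    refine tsum_congr fun k => ?_
    rw [Set.indicator_apply]
    simp only [mem_setOf_eq]
  have habs_nn : (0 : (Ω × ℕ) → ℝ) ≤ᵐ[ν] fun q : Ω × ℕ => |f q.2 q.1| :=
    ae_of_all _ fun q => abs_nonneg _
  have hlc := lintegral_rpow_eq_lintegral_meas_lt_mul ν habs_nn hFq.abs.aemeasurable hp0
  have hSmeas : ∀ t : ℝ, MeasurableSet {ω | ENNReal.ofReal t < M ω} := fun t =>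
    measurableSet_lt measurable_const hM
  have key2 : ∀ t : ℝ, 0 < t →
      ν {q : Ω × ℕ | t < |f q.2 q.1|} * ENNReal.ofReal (t ^ (p-1))
        ≤ (C * J1) * (μ {ω | ENNReal.ofReal t < M ω} * ENNReal.ofReal (t ^ (p-2))) := by
    intro t ht
    set S := {ω | ENNReal.ofReal t < M ω} with hSdef
    have hot0 : ENNReal.ofReal t ≠ 0 := by simp [ht, ht.le, not_le, ENNReal.ofReal_eq_zero]
    have hott : ENNReal.ofReal t ≠ ⊤ := ENNReal.ofReal_ne_top
    have hexiff : ∀ ω, (∃ n, t < |f n ω|) ↔ ENNReal.ofReal t < M ω := by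
      intro ω
      rw [hMdef]
      simp only []
      rw [lt_iSup_iff]
      apply exists_congr fun n => ?_
      rw [show ((‖f n ω‖₊ : ℝ≥0∞)) = ENNReal.ofReal |f n ω| from Real.enorm_eq_ofReal_abs _, ENNReal.ofReal_lt_ofReal_iff_of_nonneg ht.le]
    set τ : Ω → ℕ∞ := fun ω => if h : ∃ n, t < |f n ω| then ((Nat.find h : ℕ) : ℕ∞) else ⊤
      with hτdef
    have hτst : IsStopTime ℱ τ := by
      intro n
      have hset : {ω | τ ω ≤ (n:ℕ∞)} = ⋃ m, ⋃ (_ : m ≤ n), {ω | t < |f m ω|} := by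
        ext ω
        simp only [mem_setOf_eq, mem_iUnion, exists_prop]
        by_cases h : ∃ k, t < |f k ω|
        · simp only [hτdef, dif_pos h, Nat.cast_le]
          exact Nat.find_le_iff h n
        · push_neg at h
          simp [hτdef, dif_neg, h]
      rw [hset]
      refine MeasurableSet.iUnion fun m => MeasurableSet.iUnion fun hm => ℱ.mono hm _ ?_
      have habs : Measurable[ℱ m] fun ω => |f m ω| :=
        @Measurable.abs ℝ Ω _ _ _ (ℱ m) (f m) _ _ (hf m)
      exact habs measurableSet_Ioi
    have hτlt : ∀ ω, τ ω < ⊤ ↔ (∃ n, t < |f n ω|) := by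
      intro ω
      rw [lt_top_iff_ne_top]
      by_cases h : ∃ n, t < |f n ω|
      · simp only [hτdef, dif_pos h]
        simp [h]
      · simp [hτdef, dif_neg h, h]
    have hτtop : {ω | τ ω < ⊤} = S := by
      ext ω
      simp only [mem_setOf_eq, hSdef]
      rw [hτlt ω, hexiff ω]
    have htb : (∫⁻ ω, ∑' k, (if t < |f k ω| then w k ω else 0) ∂μ) ≤ tentMass μ w τ := by
      refine lintegral_mono fun ω => ENNReal.tsum_le_tsum fun k => ?_
      by_cases hk : t < |f k ω|
      · have h1 : τ ω ≤ (k:ℕ∞) := by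
          simp only [hτdef, dif_pos (⟨k, hk⟩ : ∃ n, t < |f n ω|), Nat.cast_le]
          exact Nat.find_min' _ hk
        have h2 : τ ω < ⊤ := (hτlt ω).mpr ⟨k, hk⟩
        rw [if_pos hk, if_pos ⟨h1, h2⟩]
      · rw [if_neg hk]
        exact zero_le
    have hle : tentMass μ w τ / μ {ω | τ ω < ⊤} ^ ((1 + 2*α : ℝ)) ≤ C := by
      rw [hCdef, carlesonNorm]
      exact le_iSup₂ (f := fun τ (_ : IsStopTime ℱ τ) =>
        tentMass μ w τ / μ {ω | τ ω < ⊤} ^ ((1 + 2*α : ℝ))) τ hτst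
    have htent : tentMass μ w τ ≤ C * μ S ^ ((1 + 2*α : ℝ)) := by
      rcases eq_or_ne (μ S) 0 with hm0 | hm0
      · have hz : tentMass μ w τ = 0 := by
          have hb : tentMass μ w τ ≤ ∫⁻ ω, S.indicator (fun _ => (⊤:ℝ≥0∞)) ω ∂μ := by
            refine lintegral_mono fun ω => ?_
            by_cases hω : ω ∈ S
            · rw [Set.indicator_of_mem hω]; exact le_top
            · rw [Set.indicator_of_notMem hω]
              have hτω : ¬ τ ω < ⊤ := fun hc => hω (hτtop ▸ (show ω ∈ {ω | τ ω < ⊤} from hc))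
              refine le_of_eq (ENNReal.tsum_eq_zero.mpr fun k => ?_)
              rw [if_neg (fun hc => hτω hc.2)]
          rw [lintegral_indicator (hSmeas t), setLIntegral_const, hm0, mul_zero] at hb
          exact le_antisymm hb (zero_le)
        rw [hz]; exact zero_le
      · have hdne : μ {ω | τ ω < ⊤} ^ ((1 + 2*α : ℝ)) ≠ 0 := by
          rw [hτtop]
          intro hc
          rcases ENNReal.rpow_eq_zero_iff.mp hc with ⟨h1, _⟩ | ⟨h1, _⟩
          · exact hm0 h1
          · exact (measure_ne_top μ S) h1
        have hdt : μ {ω | τ ω < ⊤} ^ ((1 + 2*α : ℝ)) ≠ ⊤ :=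
          ENNReal.rpow_ne_top_of_nonneg (by linarith) (measure_ne_top μ _)
        calc tentMass μ w τ
            = tentMass μ w τ / μ {ω | τ ω < ⊤} ^ ((1 + 2*α : ℝ))
              * μ {ω | τ ω < ⊤} ^ ((1 + 2*α : ℝ)) := (ENNReal.div_mul_cancel hdne hdt).symm
          _ ≤ C * μ {ω | τ ω < ⊤} ^ ((1 + 2*α : ℝ)) := mul_le_mul_left hle _
          _ = C * μ S ^ ((1 + 2*α : ℝ)) := by rw [hτtop]
    have hMar : μ S ^ (2*α) * ENNReal.ofReal t ≤ J1 := by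
      have hsub : S ⊆ {ω | ENNReal.ofReal t ^ r ≤ M ω ^ r} := fun ω hω =>
        ENNReal.rpow_le_rpow (le_of_lt hω) hr0.le
      have h1 : ENNReal.ofReal t ^ r * μ S ≤ J := by
        calc ENNReal.ofReal t ^ r * μ S
            ≤ ENNReal.ofReal t ^ r * μ {ω | ENNReal.ofReal t ^ r ≤ M ω ^ r} :=
              mul_le_mul_right (measure_mono hsub) _
          _ ≤ ∫⁻ ω, M ω ^ r ∂μ := mul_meas_ge_le_lintegral₀ (hM.pow measurable_const).aemeasurable _
      have hεne : ENNReal.ofReal t ^ r ≠ 0 := by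
        intro hc
        rcases ENNReal.rpow_eq_zero_iff.mp hc with ⟨h1', _⟩ | ⟨h1', _⟩
        · exact hot0 h1'
        · exact hott h1'
      have hεt : ENNReal.ofReal t ^ r ≠ ⊤ := ENNReal.rpow_ne_top_of_nonneg hr0.le hott
      have h2 : μ S ≤ J / ENNReal.ofReal t ^ r :=
        (ENNReal.le_div_iff_mul_le (Or.inl hεne) (Or.inl hεt)).mpr (by rwa [mul_comm])
      have hr1 : r * (2*α) = 1 := by
        rw [hrdef]; field_simp
      have h3 : μ S ^ (2*α) ≤ J1 / ENNReal.ofReal t := by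
        calc μ S ^ (2*α) ≤ (J / ENNReal.ofReal t ^ r) ^ (2*α) := ENNReal.rpow_le_rpow h2 hα2.le
          _ = J1 / (ENNReal.ofReal t ^ r) ^ (2*α) := ENNReal.div_rpow_of_nonneg _ _ hα2.le
          _ = J1 / ENNReal.ofReal t := by
              rw [← ENNReal.rpow_mul, hr1, ENNReal.rpow_one]
      calc μ S ^ (2*α) * ENNReal.ofReal t ≤ J1 / ENNReal.ofReal t * ENNReal.ofReal t :=
            mul_le_mul_left h3 _
        _ = J1 := ENNReal.div_mul_cancel hot0 hott
    have h4 : t ^ (p-1) = t ^ (p-2) * t := by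
      rw [show t ^ (p-2) * t = t ^ (p-2) * t ^ (1:ℝ) by rw [Real.rpow_one],
        ← Real.rpow_add ht]
      congr 1; ring
    have hts : ENNReal.ofReal (t ^ (p-1)) = ENNReal.ofReal (t ^ (p-2)) * ENNReal.ofReal t := by
      rw [h4, ENNReal.ofReal_mul (Real.rpow_nonneg ht.le _)]
    have hsplit : μ S ^ ((1 + 2*α : ℝ)) = μ S ^ (2*α) * μ S := by
      rcases eq_or_ne (μ S) 0 with h0 | h0
      · rw [h0, ENNReal.zero_rpow_of_pos (by linarith), ENNReal.zero_rpow_of_pos hα2, zero_mul]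
      · rw [show (1 + 2*α : ℝ) = 2*α + 1 by ring,
          ENNReal.rpow_add _ _ h0 (measure_ne_top μ S), ENNReal.rpow_one]
    calc ν {q : Ω × ℕ | t < |f q.2 q.1|} * ENNReal.ofReal (t ^ (p-1))
        ≤ tentMass μ w τ * ENNReal.ofReal (t ^ (p-1)) := by
          refine mul_le_mul_left ?_ _
          rw [hνset t]; exact htb
      _ ≤ (C * μ S ^ ((1 + 2*α : ℝ))) * ENNReal.ofReal (t ^ (p-1)) := mul_le_mul_left htent _
      _ = (C * μ S) * (μ S ^ (2*α) * ENNReal.ofReal t) * ENNReal.ofReal (t ^ (p-2)) := by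
          rw [hsplit, hts]; ring
      _ ≤ (C * μ S) * J1 * ENNReal.ofReal (t ^ (p-2)) :=
          mul_le_mul_left (mul_le_mul_right hMar _) _
      _ = (C * J1) * (μ S * ENNReal.ofReal (t ^ (p-2))) := by ring
  have hCJ1ne : C * J1 ≠ ⊤ := ENNReal.mul_ne_top hCt hJ1t
  have hMfin : ∀ᵐ ω ∂μ, M ω ≠ ⊤ := by
    have h := ae_lt_top (f := fun ω => M ω ^ (p-1)) (hM.pow measurable_const)
      (by rw [← hI2def]; exact hI2t)
    filter_upwards [h] with ω hω
    intro hc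
    rw [hc, ENNReal.top_rpow_of_pos hp1] at hω
    exact lt_irrefl _ hω
  set g : Ω → ℝ := fun ω => (M ω).toReal with hgdef
  have hgm : Measurable g := hM.ennreal_toReal
  have heq1 : I2 = ∫⁻ ω, ENNReal.ofReal (g ω ^ (p-1)) ∂μ := by
    rw [hI2def]
    apply lintegral_congr_ae
    filter_upwards [hMfin] with ω hω
    have h5 : ENNReal.ofReal (g ω ^ (p-1)) = ENNReal.ofReal (g ω) ^ (p-1) :=
      (ENNReal.ofReal_rpow_of_nonneg ENNReal.toReal_nonneg hp1.le).symm
    rw [h5, show ENNReal.ofReal (g ω) = M ω from ENNReal.ofReal_toReal hω]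
  have hgnn : (0 : Ω → ℝ) ≤ᵐ[μ] g := ae_of_all _ fun ω => ENNReal.toReal_nonneg
  have hlc2 := lintegral_rpow_eq_lintegral_meas_lt_mul μ hgnn hgm.aemeasurable hp1
  have hset2 : ∀ t : ℝ, 0 < t → μ {a | t < g a} = μ {ω | ENNReal.ofReal t < M ω} := by
    intro t ht
    apply measure_congr
    rw [Filter.eventuallyEq_set]
    filter_upwards [hMfin] with ω hω
    simp only [mem_setOf_eq, hgdef]
    exact (ENNReal.ofReal_lt_iff_lt_toReal ht.le hω).symm
  have hB : (∫⁻ t in Ioi (0:ℝ), μ {ω | ENNReal.ofReal t < M ω} * ENNReal.ofReal (t ^ (p-2)))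
      = (ENNReal.ofReal (p-1))⁻¹ * I2 := by
    have e1 : (∫⁻ t in Ioi (0:ℝ), μ {ω | ENNReal.ofReal t < M ω} * ENNReal.ofReal (t ^ (p-2)))
        = ∫⁻ t in Ioi (0:ℝ), μ {a | t < g a} * ENNReal.ofReal (t ^ (p-1-1)) := by
      refine setLIntegral_congr_fun measurableSet_Ioi (fun t ht => ?_)
      rw [hset2 t ht, show (p-1-1 : ℝ) = p - 2 by ring]
    rw [e1]
    have hne : ENNReal.ofReal (p-1) ≠ 0 := by
      simp only [ne_eq, ENNReal.ofReal_eq_zero, not_le]; linarith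
    have hnet : ENNReal.ofReal (p-1) ≠ ⊤ := ENNReal.ofReal_ne_top
    rw [heq1, hlc2, ← mul_assoc, ENNReal.inv_mul_cancel hne hnet, one_mul]
  rw [hLHS, hlc]
  have hmono : (∫⁻ t in Ioi (0:ℝ), ν {a : Ω × ℕ | t < |f a.2 a.1|} * ENNReal.ofReal (t ^ (p-1)))
      ≤ ∫⁻ t in Ioi (0:ℝ),
          (C * J1) * (μ {ω | ENNReal.ofReal t < M ω} * ENNReal.ofReal (t ^ (p-2))) := by
    refine lintegral_mono_ae ?_
    filter_upwards [self_mem_ae_restrict measurableSet_Ioi] with t ht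
    exact key2 t ht
  calc ENNReal.ofReal p
        * ∫⁻ t in Ioi (0:ℝ), ν {a : Ω × ℕ | t < |f a.2 a.1|} * ENNReal.ofReal (t ^ (p-1))
      ≤ ENNReal.ofReal p * ∫⁻ t in Ioi (0:ℝ),
          (C * J1) * (μ {ω | ENNReal.ofReal t < M ω} * ENNReal.ofReal (t ^ (p-2))) :=
        mul_le_mul_right hmono _
    _ = ENNReal.ofReal p * ((C * J1) * ((ENNReal.ofReal (p-1))⁻¹ * I2)) := by
        rw [lintegral_const_mul' _ _ hCJ1ne, hB]
    _ = ENNReal.ofReal (p/(p-1)) * C * J1 * I2 := by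
        rw [ENNReal.ofReal_div_of_pos hp1, div_eq_mul_inv]
        generalize (ENNReal.ofReal (p-1))⁻¹ = K
        ring
end
end

section
/- The square function S(f) = (Σ_{k=0}^∞ |d_k f|²)^{1/2} is bounded on BMO^α: there is a constant C such that ‖S(f)‖_{BMO^α} ≤ C ‖f‖_{BMO^α} for all f ∈ BMO^α, where S_n(f) = (Σ_{k=0}^n |d_k f|²)^{1/2} plays the role of the n-th term of the adapted process S(f). -/
open MeasureTheory ENNReal Set
open scoped Classical NNReal

noncomputable section

/-- The square function `S(f) = (Σ_{k=0}^∞ |d_k f|²)^{1/2}`. -/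
def sqFn {Ω : Type*} (f : ℕ → Ω → ℝ) (ω : Ω) : ℝ :=
  Real.sqrt (∑' k : ℕ, (mdiff f k ω) ^ 2)

/-- The truncated square function `S_n(f) = (Σ_{k=0}^n |d_k f|²)^{1/2}`. -/
def sqFnN {Ω : Type*} (f : ℕ → Ω → ℝ) (n : ℕ) (ω : Ω) : ℝ :=
  Real.sqrt (∑ k ∈ Finset.range (n + 1), (mdiff f k ω) ^ 2)

section Aux8
set_option linter.unusedSectionVars false
variable {Ω : Type} {m0 : MeasurableSpace Ω} {μ : Measure Ω} [IsProbabilityMeasure μ]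
  {ℱ : Filtration ℕ m0} {f : ℕ → Ω → ℝ} {g : Ω → ℝ}

lemma aux8_integrable_mul {h x : Ω → ℝ} (hh : MemLp h 2 μ) (hx : MemLp x 2 μ) :
    Integrable (fun ω => h ω * x ω) μ := by
  have hb : Integrable (fun ω => (h ω ^ 2 + x ω ^ 2) / 2) μ :=
    (hh.integrable_sq.add hx.integrable_sq).div_const 2
  refine hb.mono' (hh.aestronglyMeasurable.mul hx.aestronglyMeasurable) ?_
  filter_upwards with ω
  rw [Real.norm_eq_abs, abs_mul]
  nlinarith [sq_nonneg (|h ω| - |x ω|), sq_abs (h ω), sq_abs (x ω), abs_nonneg (h ω),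
    abs_nonneg (x ω)]

lemma aux8_memℒp_condexp (n : ℕ) (hg : MemLp g 2 μ) :
    MemLp (μ[g|ℱ n]) 2 μ := by
  have hm : (ℱ n : MeasurableSpace Ω) ≤ m0 := ℱ.le n
  have hGg : (hg.toLp g : Ω → ℝ) =ᵐ[μ] g := hg.coeFn_toLp
  have h3 := aestronglyMeasurable_condExpL2 (E := ℝ) (𝕜 := ℝ) hm (hg.toLp g)
  have h1 : ∀ s, MeasurableSet[ℱ n] s → μ s < ⊤ →
      IntegrableOn (condExpL2 ℝ ℝ hm (hg.toLp g) : Ω → ℝ) s μ :=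
    fun s _ hμs => integrableOn_condExpL2_of_measure_ne_top hm hμs.ne _
  have h2 : ∀ s, MeasurableSet[ℱ n] s → μ s < ⊤ →
      ∫ ω in s, (condExpL2 ℝ ℝ hm (hg.toLp g) : Ω → ℝ) ω ∂μ = ∫ ω in s, g ω ∂μ := by
    intro s hs hμs
    rw [integral_condExpL2_eq_of_fin_meas_real _ hs hμs.ne]
    exact setIntegral_congr_ae (hm s hs) (hGg.mono fun ω hω _ => hω)
  have h_eq := ae_eq_condExp_of_forall_setIntegral_eq hm (hg.integrable one_le_two) h1 h2 h3
  exact (Lp.memLp _).ae_eq h_eq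

lemma aux8_orth (n : ℕ) {h x : Ω → ℝ}
    (hh2 : MemLp h 2 μ) (hhm : StronglyMeasurable[ℱ n] h) (hx2 : MemLp x 2 μ)
    (hcx : μ[x|ℱ n] =ᵐ[μ] fun _ => (0 : ℝ)) : ∫ ω, h ω * x ω ∂μ = 0 := by
  have hm : (ℱ n : MeasurableSpace Ω) ≤ m0 := ℱ.le n
  have hint : Integrable (fun ω => h ω * x ω) μ := aux8_integrable_mul hh2 hx2
  have h1 : μ[(fun ω => h ω * x ω)|ℱ n] =ᵐ[μ] fun ω => h ω * (μ[x|ℱ n]) ω :=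
    condExp_mul_of_stronglyMeasurable_left hhm hint (hx2.integrable one_le_two)
  have h2 : μ[(fun ω => h ω * x ω)|ℱ n] =ᵐ[μ] fun _ => (0 : ℝ) := by
    filter_upwards [h1, hcx] with ω e1 e2
    rw [e1, e2, mul_zero]
  calc ∫ ω, h ω * x ω ∂μ = ∫ ω, (μ[(fun ω => h ω * x ω)|ℱ n]) ω ∂μ :=
        (integral_condExp hm).symm
    _ = 0 := by rw [integral_congr_ae h2, integral_const]; simp

lemma aux8_memf (hg : MemLp g 2 μ) (hcond : ∀ n, f n =ᵐ[μ] μ[g | ℱ n]) (n : ℕ) :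
    MemLp (f n) 2 μ :=
  MemLp.ae_eq (hcond n).symm (aux8_memℒp_condexp n hg)

lemma aux8_memd (hg : MemLp g 2 μ) (hcond : ∀ n, f n =ᵐ[μ] μ[g | ℱ n]) (n : ℕ) :
    MemLp (mdiff f n) 2 μ := by
  cases n with
  | zero =>
    have : mdiff f 0 = f 0 := by funext ω; simp [mdiff]
    rw [this]; exact aux8_memf hg hcond 0
  | succ k =>
    have : mdiff f (k + 1) = f (k + 1) - f k := by funext ω; simp [mdiff]
    rw [this]; exact (aux8_memf hg hcond (k + 1)).sub (aux8_memf hg hcond k)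

lemma aux8_smd (hf : Martingale f ℱ μ) (n : ℕ) : StronglyMeasurable[ℱ n] (mdiff f n) := by
  cases n with
  | zero =>
    have : mdiff f 0 = f 0 := by funext ω; simp [mdiff]
    rw [this]; exact hf.stronglyAdapted 0
  | succ k =>
    have : mdiff f (k + 1) = f (k + 1) - f k := by funext ω; simp [mdiff]
    rw [this]
    exact (hf.stronglyAdapted (k + 1)).sub ((hf.stronglyAdapted k).mono (ℱ.mono k.le_succ))

lemma aux8_mempred (hg : MemLp g 2 μ) (hcond : ∀ n, f n =ᵐ[μ] μ[g | ℱ n]) (n : ℕ) :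
    MemLp (predVal f n) 2 μ := by
  cases n with
  | zero =>
    have : predVal f 0 = fun _ : Ω => (0 : ℝ) := by funext ω; simp [predVal]
    rw [this]; exact memLp_const 0
  | succ k =>
    have : predVal f (k + 1) = f k := by funext ω; simp [predVal]
    rw [this]; exact aux8_memf hg hcond k

lemma aux8_czero (hf : Martingale f ℱ μ) (hg : MemLp g 2 μ)
    (hcond : ∀ n, f n =ᵐ[μ] μ[g | ℱ n]) (j : ℕ) :
    μ[(fun ω => g ω - f j ω)|ℱ j] =ᵐ[μ] fun _ => (0 : ℝ) := by
  have hig : Integrable g μ := hg.integrable one_le_two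
  have hifj : Integrable (f j) μ := (aux8_memf hg hcond j).integrable one_le_two
  have hsub : μ[(fun ω => g ω - f j ω)|ℱ j] =ᵐ[μ] μ[g|ℱ j] - μ[f j|ℱ j] :=
    condExp_sub hig hifj _
  have hcfj : μ[f j|ℱ j] = f j :=
    condExp_of_stronglyMeasurable (ℱ.le j) (hf.stronglyAdapted j) hifj
  filter_upwards [hsub, (hcond j).symm] with ω e1 e2
  rw [e1, Pi.sub_apply, hcfj, e2, sub_self]

set_option maxHeartbeats 1000000 in
lemma aux8_step (hf : Martingale f ℱ μ) (hg : MemLp g 2 μ)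
    (hcond : ∀ n, f n =ᵐ[μ] μ[g | ℱ n]) {n : ℕ} {A : Set Ω}
    (hA : MeasurableSet[ℱ n] A) {j : ℕ} (hnj : n ≤ j) :
    ∫ ω in A, (g ω - predVal f j ω) ^ 2 ∂μ
      = ∫ ω in A, (g ω - f j ω) ^ 2 ∂μ + ∫ ω in A, (mdiff f j ω) ^ 2 ∂μ := by
  have hAm : MeasurableSet A := ℱ.le n A hA
  have hAj : MeasurableSet[ℱ j] A := ℱ.mono hnj A hA
  have hma : MemLp (fun ω => g ω - f j ω) 2 μ := hg.sub (aux8_memf hg hcond j)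
  have hmb : MemLp (mdiff f j) 2 μ := aux8_memd hg hcond j
  have hdecomp : ∀ ω, g ω - predVal f j ω = (g ω - f j ω) + mdiff f j ω := by
    intro ω
    cases j with
    | zero => simp [predVal, mdiff]
    | succ k =>
      simp only [predVal, mdiff, Nat.succ_ne_zero, if_false, Nat.add_sub_cancel]
      ring
  have ia2 : Integrable (fun ω => (g ω - f j ω) ^ 2) (μ.restrict A) :=
    hma.integrable_sq.restrict
  have ib2 : Integrable (fun ω => (mdiff f j ω) ^ 2) (μ.restrict A) :=
    hmb.integrable_sq.restrict
  have iab : Integrable (fun ω => mdiff f j ω * (g ω - f j ω)) (μ.restrict A) :=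
    (aux8_integrable_mul hmb hma).restrict
  have hcross : ∫ ω in A, mdiff f j ω * (g ω - f j ω) ∂μ = 0 := by
    have hind : A.indicator (fun ω => mdiff f j ω * (g ω - f j ω))
        = fun ω => A.indicator (mdiff f j) ω * (g ω - f j ω) := by
      funext ω
      by_cases hω : ω ∈ A
      · simp [Set.indicator_of_mem hω]
      · simp [Set.indicator_of_notMem hω]
    rw [← integral_indicator hAm, hind]
    exact aux8_orth j (hmb.indicator hAm) ((aux8_smd hf j).indicator hAj) hma
      (aux8_czero hf hg hcond j)
  have e1 : ∫ ω in A, (g ω - predVal f j ω) ^ 2 ∂μ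
      = ∫ ω in A, ((g ω - f j ω) ^ 2
          + ((mdiff f j ω) ^ 2 + 2 * (mdiff f j ω * (g ω - f j ω)))) ∂μ := by
    apply integral_congr_ae
    filter_upwards with ω
    rw [hdecomp ω]; ring
  have e2 : ∫ ω in A, ((g ω - f j ω) ^ 2
          + ((mdiff f j ω) ^ 2 + 2 * (mdiff f j ω * (g ω - f j ω)))) ∂μ
      = ∫ ω in A, (g ω - f j ω) ^ 2 ∂μ
          + ∫ ω in A, ((mdiff f j ω) ^ 2 + 2 * (mdiff f j ω * (g ω - f j ω))) ∂μ :=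
    integral_add ia2 (ib2.add (iab.const_mul 2))
  have e3 : ∫ ω in A, ((mdiff f j ω) ^ 2 + 2 * (mdiff f j ω * (g ω - f j ω))) ∂μ
      = ∫ ω in A, (mdiff f j ω) ^ 2 ∂μ
          + ∫ ω in A, 2 * (mdiff f j ω * (g ω - f j ω)) ∂μ :=
    integral_add ib2 (iab.const_mul 2)
  have e4 := integral_const_mul (μ := μ.restrict A) 2 (fun ω => mdiff f j ω * (g ω - f j ω))
  rw [e1, e2, e3, e4, hcross]
  ring

lemma aux8_keyEq (hf : Martingale f ℱ μ) (hg : MemLp g 2 μ)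
    (hcond : ∀ n, f n =ᵐ[μ] μ[g | ℱ n]) {n : ℕ} {A : Set Ω}
    (hA : MeasurableSet[ℱ n] A) (m : ℕ) :
    ∫ ω in A, (g ω - predVal f n ω) ^ 2 ∂μ
      = (∑ k ∈ Finset.range m, ∫ ω in A, (mdiff f (k + n) ω) ^ 2 ∂μ)
        + ∫ ω in A, (g ω - predVal f (m + n) ω) ^ 2 ∂μ := by
  induction m with
  | zero => simp
  | succ m ih =>
    have hstep := aux8_step hf hg hcond hA (Nat.le_add_left n m)
    have hpred : ∀ ω : Ω, predVal f (m + 1 + n) ω = f (m + n) ω := by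
      intro ω; simp [predVal, Nat.add_right_comm m 1 n]
    have hlast : ∫ ω in A, (g ω - predVal f (m + 1 + n) ω) ^ 2 ∂μ
        = ∫ ω in A, (g ω - f (m + n) ω) ^ 2 ∂μ := by
      apply integral_congr_ae
      filter_upwards with ω
      rw [hpred ω]
    rw [ih, hstep, Finset.sum_range_succ, hlast]
    ring

lemma aux8_key (hf : Martingale f ℱ μ) (hg : MemLp g 2 μ)
    (hcond : ∀ n, f n =ᵐ[μ] μ[g | ℱ n]) {n : ℕ} {A : Set Ω}
    (hA : MeasurableSet[ℱ n] A) (m : ℕ) :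
    ∑ k ∈ Finset.range m, ∫ ω in A, (mdiff f (k + n) ω) ^ 2 ∂μ
      ≤ ∫ ω in A, (g ω - predVal f n ω) ^ 2 ∂μ := by
  rw [aux8_keyEq hf hg hcond hA m]
  have h0 : 0 ≤ ∫ ω in A, (g ω - predVal f (m + n) ω) ^ 2 ∂μ :=
    integral_nonneg fun ω => sq_nonneg _
  linarith

lemma aux8_ennnorm_sq_eq (r : ℝ) :
    (‖r‖₊ : ℝ≥0∞) ^ 2 = ENNReal.ofReal (r ^ 2) := by
  rw [← ENNReal.ofReal_coe_nnreal, coe_nnnorm, ← ENNReal.ofReal_pow (norm_nonneg _), Real.norm_eq_abs,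
    sq_abs]

lemma aux8_ofReal_lintegral {h : Ω → ℝ} (mem : MemLp h 2 μ) (A : Set Ω) :
    ∫⁻ ω in A, (‖h ω‖₊ : ℝ≥0∞) ^ 2 ∂μ = ENNReal.ofReal (∫ ω in A, h ω ^ 2 ∂μ) := by
  rw [ofReal_integral_eq_lintegral_ofReal mem.integrable_sq.restrict
    (Filter.Eventually.of_forall fun ω => sq_nonneg _)]
  apply lintegral_congr
  intro ω
  rw [aux8_ennnorm_sq_eq]

lemma aux8_summable_ae (hf : Martingale f ℱ μ) (hg : MemLp g 2 μ)
    (hcond : ∀ n, f n =ᵐ[μ] μ[g | ℱ n]) :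
    ∀ᵐ ω ∂μ, Summable fun k => (mdiff f k ω) ^ 2 := by
  have hmeas : ∀ k : ℕ, Measurable fun ω => ((‖mdiff f k ω‖₊ : ℝ≥0∞) ^ 2) := fun k =>
    (((aux8_smd hf k).mono (ℱ.le k)).measurable.enorm).pow_const 2
  have hA0 : MeasurableSet[ℱ 0] (Set.univ : Set Ω) := MeasurableSet.univ
  have hbound : ∫⁻ ω, ∑' k : ℕ, (‖mdiff f k ω‖₊ : ℝ≥0∞) ^ 2 ∂μ ≠ ⊤ := by
    rw [lintegral_tsum fun k => (hmeas k).aemeasurable]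
    have hle : ∑' k : ℕ, ∫⁻ ω, (‖mdiff f k ω‖₊ : ℝ≥0∞) ^ 2 ∂μ
        ≤ ENNReal.ofReal (∫ ω, (g ω - predVal f 0 ω) ^ 2 ∂μ) := by
      rw [ENNReal.tsum_eq_iSup_nat]
      refine iSup_le fun M => ?_
      have h1 : ∀ k : ℕ, ∫⁻ ω, (‖mdiff f k ω‖₊ : ℝ≥0∞) ^ 2 ∂μ
          = ENNReal.ofReal (∫ ω, (mdiff f k ω) ^ 2 ∂μ) := by
        intro k
        have h := aux8_ofReal_lintegral (μ := μ) (aux8_memd hg hcond k) Set.univ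
        simpa using h
      calc ∑ k ∈ Finset.range M, ∫⁻ ω, (‖mdiff f k ω‖₊ : ℝ≥0∞) ^ 2 ∂μ
          = ∑ k ∈ Finset.range M, ENNReal.ofReal (∫ ω, (mdiff f k ω) ^ 2 ∂μ) :=
            Finset.sum_congr rfl fun k _ => h1 k
        _ = ENNReal.ofReal (∑ k ∈ Finset.range M, ∫ ω, (mdiff f k ω) ^ 2 ∂μ) := by
            rw [ENNReal.ofReal_sum_of_nonneg]
            intro k _
            exact integral_nonneg fun ω => sq_nonneg _
        _ ≤ ENNReal.ofReal (∫ ω, (g ω - predVal f 0 ω) ^ 2 ∂μ) := by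
            apply ENNReal.ofReal_le_ofReal
            have h := aux8_key hf hg hcond hA0 M
            simpa using h
    exact (hle.trans_lt ENNReal.ofReal_lt_top).ne
  have htop : ∀ᵐ ω ∂μ, ∑' k : ℕ, (‖mdiff f k ω‖₊ : ℝ≥0∞) ^ 2 < ⊤ :=
    ae_lt_top (Measurable.ennreal_tsum hmeas) hbound
  filter_upwards [htop] with ω hω
  have h1 : ∑' k : ℕ, ((‖mdiff f k ω‖₊ ^ 2 : ℝ≥0) : ℝ≥0∞) ≠ ⊤ := by
    simp_rw [ENNReal.coe_pow]
    exact hω.ne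
  have h2 : Summable fun k => (‖mdiff f k ω‖₊ ^ 2 : ℝ≥0) :=
    ENNReal.tsum_coe_ne_top_iff_summable.mp h1
  have h3 : Summable fun k => ((‖mdiff f k ω‖₊ ^ 2 : ℝ≥0) : ℝ) :=
    NNReal.summable_coe.mpr h2
  refine h3.congr fun k => ?_
  push_cast
  rw [Real.norm_eq_abs, sq_abs]

lemma aux8_predVal_sqFnN' (n : ℕ) (ω : Ω) :
    predVal (sqFnN f) n ω = Real.sqrt (∑ k ∈ Finset.range n, (mdiff f k ω) ^ 2) := by
  cases n with
  | zero => simp [predVal]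
  | succ m => simp [predVal, sqFnN]

lemma aux8_ptwise {ω : Ω} (hs : Summable fun k => (mdiff f k ω) ^ 2) (n : ℕ) :
    (‖sqFn f ω - predVal (sqFnN f) n ω‖₊ : ℝ≥0∞) ^ 2
      ≤ ∑' k : ℕ, (‖mdiff f (k + n) ω‖₊ : ℝ≥0∞) ^ 2 := by
  set P : ℝ := ∑ k ∈ Finset.range n, (mdiff f k ω) ^ 2 with hP
  set T : ℝ := ∑' k : ℕ, (mdiff f k ω) ^ 2 with hT
  set R : ℝ := ∑' k : ℕ, (mdiff f (k + n) ω) ^ 2 with hR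
  have hPR : P + R = T := Summable.sum_add_tsum_nat_add n hs
  have hP0 : 0 ≤ P := Finset.sum_nonneg fun k _ => sq_nonneg _
  have hR0 : 0 ≤ R := tsum_nonneg fun k => sq_nonneg _
  have hT0 : 0 ≤ T := by linarith
  have hPT : P ≤ T := by linarith
  have hu : Real.sqrt P ^ 2 = P := Real.sq_sqrt hP0
  have hv : Real.sqrt T ^ 2 = T := Real.sq_sqrt hT0
  have huv : Real.sqrt P ≤ Real.sqrt T := Real.sqrt_le_sqrt hPT
  have hu0 : 0 ≤ Real.sqrt P := Real.sqrt_nonneg _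
  have hxR : (Real.sqrt T - Real.sqrt P) ^ 2 ≤ R := by
    nlinarith [mul_nonneg hu0 (sub_nonneg.mpr huv)]
  have hLHS : (‖sqFn f ω - predVal (sqFnN f) n ω‖₊ : ℝ≥0∞) ^ 2
      = ENNReal.ofReal ((Real.sqrt T - Real.sqrt P) ^ 2) := by
    rw [aux8_ennnorm_sq_eq, aux8_predVal_sqFnN']
    rfl
  rw [hLHS]
  calc ENNReal.ofReal ((Real.sqrt T - Real.sqrt P) ^ 2)
      ≤ ENNReal.ofReal R := ENNReal.ofReal_le_ofReal hxR
    _ = ∑' k : ℕ, ENNReal.ofReal ((mdiff f (k + n) ω) ^ 2) := by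
        rw [hR, ENNReal.ofReal_tsum_of_nonneg (fun k => sq_nonneg _)
          ((summable_nat_add_iff n).mpr hs)]
    _ = ∑' k : ℕ, (‖mdiff f (k + n) ω‖₊ : ℝ≥0∞) ^ 2 :=
        tsum_congr fun k => (aux8_ennnorm_sq_eq _).symm

lemma aux8_main (hf : Martingale f ℱ μ) (hg : MemLp g 2 μ)
    (hcond : ∀ n, f n =ᵐ[μ] μ[g | ℱ n]) {n : ℕ} {A : Set Ω}
    (hA : MeasurableSet[ℱ n] A) :
    ∫⁻ ω in A, (‖sqFn f ω - predVal (sqFnN f) n ω‖₊ : ℝ≥0∞) ^ 2 ∂μ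
      ≤ ∫⁻ ω in A, (‖g ω - predVal f n ω‖₊ : ℝ≥0∞) ^ 2 ∂μ := by
  have hmempred : MemLp (fun ω => g ω - predVal f n ω) 2 μ :=
    hg.sub (aux8_mempred hg hcond n)
  have hmeas : ∀ k : ℕ, Measurable fun ω => ((‖mdiff f (k + n) ω‖₊ : ℝ≥0∞) ^ 2) := fun k =>
    (((aux8_smd hf (k + n)).mono (ℱ.le _)).measurable.enorm).pow_const 2
  calc ∫⁻ ω in A, (‖sqFn f ω - predVal (sqFnN f) n ω‖₊ : ℝ≥0∞) ^ 2 ∂μ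
      ≤ ∫⁻ ω in A, ∑' k : ℕ, (‖mdiff f (k + n) ω‖₊ : ℝ≥0∞) ^ 2 ∂μ := by
        refine lintegral_mono_ae (ae_restrict_of_ae ?_)
        filter_upwards [aux8_summable_ae hf hg hcond] with ω hω
        exact aux8_ptwise hω n
    _ = ∑' k : ℕ, ∫⁻ ω in A, (‖mdiff f (k + n) ω‖₊ : ℝ≥0∞) ^ 2 ∂μ :=
        lintegral_tsum fun k => (hmeas k).aemeasurable
    _ ≤ ENNReal.ofReal (∫ ω in A, (g ω - predVal f n ω) ^ 2 ∂μ) := by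
        rw [ENNReal.tsum_eq_iSup_nat]
        refine iSup_le fun M => ?_
        calc ∑ k ∈ Finset.range M, ∫⁻ ω in A, (‖mdiff f (k + n) ω‖₊ : ℝ≥0∞) ^ 2 ∂μ
            = ∑ k ∈ Finset.range M,
                ENNReal.ofReal (∫ ω in A, (mdiff f (k + n) ω) ^ 2 ∂μ) :=
              Finset.sum_congr rfl fun k _ =>
                aux8_ofReal_lintegral (aux8_memd hg hcond (k + n)) A
          _ = ENNReal.ofReal
                (∑ k ∈ Finset.range M, ∫ ω in A, (mdiff f (k + n) ω) ^ 2 ∂μ) := by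
              rw [ENNReal.ofReal_sum_of_nonneg]
              intro k _
              exact integral_nonneg fun ω => sq_nonneg _
          _ ≤ ENNReal.ofReal (∫ ω in A, (g ω - predVal f n ω) ^ 2 ∂μ) :=
              ENNReal.ofReal_le_ofReal (aux8_key hf hg hcond hA M)
    _ = ∫⁻ ω in A, (‖g ω - predVal f n ω‖₊ : ℝ≥0∞) ^ 2 ∂μ :=
        (aux8_ofReal_lintegral hmempred A).symm

end Aux8

/-- the square function is bounded on `BMO^α`:
`‖S(f)‖_{BMO^α} ≤ C ‖f‖_{BMO^α}`, where the `BMO^α` norm of the adapted process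
`S(f)` uses `S_{n-1}(f)` as the `(n-1)`-th term. -/
theorem stmt8 :
    ∃ C : ℝ≥0∞, 0 < C ∧ C < ⊤ ∧
      ∀ {Ω : Type} {m0 : MeasurableSpace Ω} (μ : Measure Ω)
        [IsProbabilityMeasure μ] (ℱ : Filtration ℕ m0)
        (α : ℝ), 0 ≤ α → α ≤ 1 →
        ∀ (f : ℕ → Ω → ℝ) (g : Ω → ℝ), Martingale f ℱ μ → MemLp g 2 μ →
          (∀ n, f n =ᵐ[μ] μ[g | ℱ n]) →
          bmoNorm μ ℱ α f g < ⊤ →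
          bmoNorm μ ℱ α (sqFnN f) (sqFn f) ≤ C * bmoNorm μ ℱ α f g := by
  refine ⟨1, zero_lt_one, ENNReal.one_lt_top, ?_⟩
  intro Ω m0 μ _ ℱ α hα0 hα1 f g hf hg hcond _
  rw [one_mul]
  unfold bmoNorm
  refine iSup_le fun n => iSup_le fun A => iSup_le fun hA => ?_
  have hterm :
      (∫⁻ ω in A, (‖g ω - predVal f n ω‖₊ : ℝ≥0∞) ^ 2 ∂μ) ^ (1/2 : ℝ) / μ A ^ (1/2 + α : ℝ)
        ≤ ⨆ (n : ℕ) (A : Set Ω) (_ : MeasurableSet[ℱ n] A),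
            (∫⁻ ω in A, (‖g ω - predVal f n ω‖₊ : ℝ≥0∞) ^ 2 ∂μ) ^ (1/2 : ℝ)
              / μ A ^ (1/2 + α : ℝ) :=
    le_iSup_of_le n (le_iSup_of_le A (le_iSup_of_le hA le_rfl))
  refine le_trans ?_ hterm
  apply ENNReal.div_le_div_right
  exact ENNReal.rpow_le_rpow (aux8_main hf hg hcond hA) (by norm_num)
end
end

section
/- Let (Ω,F,P) be a probability space where each F_n is atomic with atoms I^{(n)}, and set ω_n = Σ |I^{(n)}| 1_{I^{(n)}}. Then for an L²-martingale f, sup_n ‖ω_n^{-α} E(|f - f_{n-1}|² | F_n)^{1/2}‖_∞ < ∞ if and only if sup_n sup_{A∈F_n} P(A)^{-1/2-α} (∫_A |f-f_{n-1}|² dP)^{1/2} < ∞, and the two quantities are equivalent norms. -/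
open MeasureTheory ENNReal Set
open scoped Classical NNReal

noncomputable section

/-- in the atomic setting (each `F_n` generated by countably many atoms
`I n j`), the atomic-weight formulation
`sup_n ‖ω_n^{-α} E(|f - f_{n-1}|²|F_n)^{1/2}‖_∞` — which on the atom `I n j` equals
`P(I n j)^{-α} ((1/P(I n j)) ∫_{I n j} |f - f_{n-1}|² dP)^{1/2}` — is finite iff the
`BMO^α` norm is finite, and the two quantities are equivalent. -/
theorem stmt13 {Ω : Type*} {m0 : MeasurableSpace Ω} (μ : Measure Ω)
    [IsProbabilityMeasure μ] (ℱ : Filtration ℕ m0)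
    (α : ℝ) (hα0 : 0 ≤ α) (hα1 : α ≤ 1)
    (I : ℕ → ℕ → Set Ω)
    (hmeas : ∀ n j, MeasurableSet[ℱ n] (I n j))
    (hdisj : ∀ n, Pairwise (Function.onFun Disjoint (I n)))
    (hcover : ∀ n, (⋃ j, I n j) = Set.univ)
    (hatomic : ∀ n (A : Set Ω), MeasurableSet[ℱ n] A → ∃ s : Set ℕ, A = ⋃ j ∈ s, I n j)
    (f : ℕ → Ω → ℝ) (g : Ω → ℝ) (hf : Martingale f ℱ μ) (hg : MemLp g 2 μ)
    (hfg : ∀ n, f n =ᵐ[μ] μ[g | ℱ n]) :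
    ((⨆ (n : ℕ) (j : ℕ),
        ((∫⁻ ω in I n j, (‖g ω - predVal f n ω‖₊ : ℝ≥0∞) ^ 2 ∂μ) / μ (I n j)) ^ (1/2 : ℝ)
          / μ (I n j) ^ α) < ⊤ ↔ bmoNorm μ ℱ α f g < ⊤) ∧
      ∃ C : ℝ≥0∞, 0 < C ∧ C < ⊤ ∧
        C⁻¹ * bmoNorm μ ℱ α f g
            ≤ (⨆ (n : ℕ) (j : ℕ),
                ((∫⁻ ω in I n j, (‖g ω - predVal f n ω‖₊ : ℝ≥0∞) ^ 2 ∂μ) / μ (I n j)) ^ (1/2 : ℝ)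
                  / μ (I n j) ^ α) ∧
          (⨆ (n : ℕ) (j : ℕ),
              ((∫⁻ ω in I n j, (‖g ω - predVal f n ω‖₊ : ℝ≥0∞) ^ 2 ∂μ) / μ (I n j)) ^ (1/2 : ℝ)
                / μ (I n j) ^ α)
            ≤ C * bmoNorm μ ℱ α f g := by
  classical
  set S : ℝ≥0∞ := ⨆ (n : ℕ) (j : ℕ),
      ((∫⁻ ω in I n j, (‖g ω - predVal f n ω‖₊ : ℝ≥0∞) ^ 2 ∂μ) / μ (I n j)) ^ (1/2 : ℝ)
        / μ (I n j) ^ α with hSdef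
  have halg : ∀ (x b : ℝ≥0∞), b ≠ ∞ →
      (x / b) ^ (1/2 : ℝ) / b ^ α = x ^ (1/2 : ℝ) / b ^ (1/2 + α : ℝ) := by
    intro x b hb
    have h1 : b ^ (1/2 : ℝ) ≠ ∞ := ENNReal.rpow_ne_top_of_nonneg (by norm_num) hb
    have h2 : b ^ α ≠ ∞ := ENNReal.rpow_ne_top_of_nonneg hα0 hb
    rw [ENNReal.div_rpow_of_nonneg _ _ (by norm_num : (0:ℝ) ≤ 1/2),
      ENNReal.rpow_add_of_nonneg (1/2 : ℝ) α (by norm_num) hα0]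
    have hdd : ∀ (a p q : ℝ≥0∞), p ≠ ∞ → q ≠ ∞ → a / p / q = a / (p * q) := by
      intro a p q hp hq
      rw [div_eq_mul_inv, div_eq_mul_inv, div_eq_mul_inv, mul_assoc,
        ← ENNReal.mul_inv (Or.inr hq) (Or.inl hp)]
    exact hdd _ _ _ h1 h2
  have hSle : S ≤ bmoNorm μ ℱ α f g := by
    rw [hSdef]
    refine iSup_le fun n => iSup_le fun j => ?_
    rw [halg _ _ (measure_ne_top μ _)]
    unfold bmoNorm
    exact le_iSup_of_le n (le_iSup_of_le (I n j) (le_iSup_of_le (hmeas n j) le_rfl))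
  have hBle : bmoNorm μ ℱ α f g ≤ S := by
    unfold bmoNorm
    refine iSup_le fun n => iSup_le fun A => iSup_le fun hA => ?_
    obtain ⟨s, rfl⟩ := hatomic n A hA
    have hmeas' : ∀ j : s, MeasurableSet (I n (j : ℕ)) := fun j => ℱ.le n _ (hmeas n j)
    have hdisj' : Pairwise (Function.onFun Disjoint fun j : s => I n (j : ℕ)) :=
      fun i j hij => hdisj n (fun h => hij (Subtype.ext h))
    have hU : (⋃ j ∈ s, I n j) = ⋃ j : s, I n (j : ℕ) := by
      rw [Set.biUnion_eq_iUnion]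
    rw [hU]
    set A' := ⋃ j : s, I n (j : ℕ) with hA'
    have hμA : μ A' = ∑' j : s, μ (I n (j : ℕ)) := measure_iUnion hdisj' hmeas'
    have hint : (∫⁻ ω in A', (‖g ω - predVal f n ω‖₊ : ℝ≥0∞) ^ 2 ∂μ)
        = ∑' j : s, ∫⁻ ω in I n (j : ℕ), (‖g ω - predVal f n ω‖₊ : ℝ≥0∞) ^ 2 ∂μ :=
      lintegral_iUnion hmeas' hdisj' _
    have atom : ∀ j : s, (∫⁻ ω in I n (j : ℕ), (‖g ω - predVal f n ω‖₊ : ℝ≥0∞) ^ 2 ∂μ)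
        ≤ S ^ (2 : ℝ) * (μ A' ^ (2*α : ℝ) * μ (I n (j : ℕ))) := by
      intro j
      rcases eq_or_ne (μ (I n (j : ℕ))) 0 with h0 | h0
      · have hz : μ.restrict (I n (j : ℕ)) = 0 := Measure.restrict_eq_zero.mpr h0
        rw [hz]; simp
      · have hbt : μ (I n (j : ℕ)) ≠ ∞ := measure_ne_top μ _
        have hα2 : μ (I n (j : ℕ)) ^ α ≠ 0 :=
          (ENNReal.rpow_pos (pos_iff_ne_zero.mpr h0) hbt).ne'
        have hα3 : μ (I n (j : ℕ)) ^ α ≠ ∞ := ENNReal.rpow_ne_top_of_nonneg hα0 hbt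
        have hterm : ((∫⁻ ω in I n (j : ℕ), (‖g ω - predVal f n ω‖₊ : ℝ≥0∞) ^ 2 ∂μ)
              / μ (I n (j : ℕ))) ^ (1/2 : ℝ) / μ (I n (j : ℕ)) ^ α ≤ S := by
          rw [hSdef]; exact le_iSup_of_le n (le_iSup_of_le (j : ℕ) le_rfl)
        rw [ENNReal.div_le_iff hα2 hα3] at hterm
        have h2 : (∫⁻ ω in I n (j : ℕ), (‖g ω - predVal f n ω‖₊ : ℝ≥0∞) ^ 2 ∂μ)
            / μ (I n (j : ℕ)) ≤ (S * μ (I n (j : ℕ)) ^ α) ^ (2 : ℝ) := by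
          have h' := ENNReal.rpow_le_rpow hterm (by norm_num : (0:ℝ) ≤ 2)
          rwa [← ENNReal.rpow_mul, (by norm_num : (1/2 : ℝ) * 2 = 1), ENNReal.rpow_one] at h'
        have h3 : (∫⁻ ω in I n (j : ℕ), (‖g ω - predVal f n ω‖₊ : ℝ≥0∞) ^ 2 ∂μ)
            ≤ (S * μ (I n (j : ℕ)) ^ α) ^ (2 : ℝ) * μ (I n (j : ℕ)) := by
          calc (∫⁻ ω in I n (j : ℕ), (‖g ω - predVal f n ω‖₊ : ℝ≥0∞) ^ 2 ∂μ)
              = (∫⁻ ω in I n (j : ℕ), (‖g ω - predVal f n ω‖₊ : ℝ≥0∞) ^ 2 ∂μ)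
                / μ (I n (j : ℕ)) * μ (I n (j : ℕ)) := (ENNReal.div_mul_cancel h0 hbt).symm
            _ ≤ _ := mul_le_mul_left h2 _
        refine h3.trans ?_
        rw [ENNReal.mul_rpow_of_nonneg _ _ (by norm_num : (0:ℝ) ≤ 2), ← ENNReal.rpow_mul,
          mul_assoc, (by ring : α * 2 = 2 * α)]
        have hsub : I n (j : ℕ) ⊆ A' := by
          rw [hA']; exact Set.subset_iUnion (fun j : s => I n (j : ℕ)) j
        gcongr
    have hsum : (∫⁻ ω in A', (‖g ω - predVal f n ω‖₊ : ℝ≥0∞) ^ 2 ∂μ)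
        ≤ S ^ (2 : ℝ) * μ A' ^ (1 + 2*α : ℝ) := by
      calc (∫⁻ ω in A', (‖g ω - predVal f n ω‖₊ : ℝ≥0∞) ^ 2 ∂μ)
          = ∑' j : s, ∫⁻ ω in I n (j : ℕ), (‖g ω - predVal f n ω‖₊ : ℝ≥0∞) ^ 2 ∂μ := hint
        _ ≤ ∑' j : s, S ^ (2 : ℝ) * (μ A' ^ (2*α : ℝ) * μ (I n (j : ℕ))) :=
            ENNReal.tsum_le_tsum atom
        _ = S ^ (2 : ℝ) * (μ A' ^ (2*α : ℝ) * ∑' j : s, μ (I n (j : ℕ))) := by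
            rw [ENNReal.tsum_mul_left, ENNReal.tsum_mul_left]
        _ = S ^ (2 : ℝ) * μ A' ^ (1 + 2*α : ℝ) := by
            rw [← hμA, ENNReal.rpow_add_of_nonneg 1 (2*α) zero_le_one (by positivity),
              ENNReal.rpow_one, mul_comm (μ A' ^ (2*α : ℝ))]
    refine ENNReal.div_le_of_le_mul ?_
    calc (∫⁻ ω in A', (‖g ω - predVal f n ω‖₊ : ℝ≥0∞) ^ 2 ∂μ) ^ (1/2 : ℝ)
        ≤ (S ^ (2 : ℝ) * μ A' ^ (1 + 2*α : ℝ)) ^ (1/2 : ℝ) :=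
          ENNReal.rpow_le_rpow hsum (by norm_num)
      _ = S * μ A' ^ (1/2 + α : ℝ) := by
          rw [ENNReal.mul_rpow_of_nonneg _ _ (by norm_num : (0:ℝ) ≤ 1/2), ← ENNReal.rpow_mul,
            ← ENNReal.rpow_mul, (by norm_num : (2:ℝ) * (1/2) = 1),
            (by ring : ((1:ℝ) + 2*α) * (1/2) = 1/2 + α), ENNReal.rpow_one]
  have key : S = bmoNorm μ ℱ α f g := le_antisymm hSle hBle
  exact ⟨by rw [key], 1, zero_lt_one, one_lt_top, by rw [key, inv_one, one_mul],
    by rw [key, one_mul]⟩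
end
end
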